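/- arXiv:2504.14397 — 2 statements merged into one kernel-verified Lean document; each statement's English description precedes it below -/
import Mathlib

section
/- In the quotient algebra T_H(H⊗V⊗H)/(R'), where R' is the span of smash relations h⊗v⊗1_H − 1_H⊗τ(h⊗v), the degree n component is isomorphic as a right H-module to the free right H-module V^{⊗n} ⊗ H; more precisely, modulo (R') every element of the degree n component of T_H(H⊗V⊗H) is congruent to an element of (k1_H⊗V⊗k1_H)^{⊗_H (n-1)} ⊗_H (k1_H⊗V⊗H). -/
open scoped TensorProduct

noncomputable section

namespace PaperTH

variable (k H V : Type*) [CommRing k] [Ring H] [AddCommGroup V] [Module k V]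

section AlgebraPart
variable [Algebra k H]

/-- The free algebra on the `k`-module `H ⊕ V`; the tensor algebra over `H` of the free
`H`-bimodule `H ⊗ V ⊗ H` is the quotient of this by the relations `baseSet` below. -/
abbrev TF := TensorAlgebra k (H × V)

/-- The `H`-generators. -/
noncomputable def jH : H →ₗ[k] TF k H V := (TensorAlgebra.ι k).comp (LinearMap.inl k H V)

/-- The `V`-generators (degree 1). -/
noncomputable def jV : V →ₗ[k] TF k H V := (TensorAlgebra.ι k).comp (LinearMap.inr k H V)

/-- Presentation relation: the relations making `H ↪ T_H(H⊗V⊗H)` an algebra map, together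
with an arbitrary set `Q` of further relations set equal to `0`.  Thus
`RingQuot (presRel Q)` models `T_H(H⊗V⊗H)/(Q)`. -/
inductive presRel (Q : Set (TF k H V)) : TF k H V → TF k H V → Prop
  | mulH (h h' : H) : presRel Q (jH k H V h * jH k H V h') (jH k H V (h * h'))
  | oneH : presRel Q (jH k H V 1) 1
  | mem {x : TF k H V} : x ∈ Q → presRel Q x 0

/-- Elements generating the two-sided ideal presenting `T_H(H⊗V⊗H)` from the free algebra. -/
def baseSet : Set (TF k H V) :=
  {x | (∃ h h', x = jH k H V h * jH k H V h' - jH k H V (h * h')) ∨ x = jH k H V 1 - 1}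

/-- The two-sided ideal generated by a set, as a `k`-submodule. -/
noncomputable def twoSidedSpan {A : Type*} [Ring A] [Algebra k A] (s : Set A) :
    Submodule k A :=
  Submodule.span k {x | ∃ a p b, p ∈ s ∧ x = a * p * b}

/-- Degree-0 piece `H` (with its unit). -/
noncomputable def HF : Submodule k (TF k H V) := LinearMap.range (jH k H V) ⊔ 1

/-- The `V`-part. -/
noncomputable def VF : Submodule k (TF k H V) := LinearMap.range (jV k H V)

/-- Degree-`n` piece of `T_H(H⊗V⊗H)`: sums of `h₀ v₁ h₁ ⋯ v_n h_n`. -/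
noncomputable def gradeF (n : ℕ) : Submodule k (TF k H V) :=
  HF k H V * (VF k H V * HF k H V) ^ n

/-- Filtration `F_n`. -/
noncomputable def filtF (n : ℕ) : Submodule k (TF k H V) := ⨆ i ≤ n, gradeF k H V i

/-- `F_{n-1}` (with `F_{-1} = ⊥`). -/
noncomputable def filtFpred (n : ℕ) : Submodule k (TF k H V) := ⨆ i < n, gradeF k H V i

/-- The image of `V ⊗ V` in degree 2. -/
noncomputable def iVV : V ⊗[k] V →ₗ[k] TF k H V :=
  (LinearMap.mul' k (TF k H V)).comp (TensorProduct.map (jV k H V) (jV k H V))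

/-- The image of `V ⊗ H` in degree 1. -/
noncomputable def iVH : V ⊗[k] H →ₗ[k] TF k H V :=
  (LinearMap.mul' k (TF k H V)).comp (TensorProduct.map (jV k H V) (jH k H V))

end AlgebraPart

section BialgebraPart
variable [Bialgebra k H]

/-- The twisting map `τ : H ⊗ V → V ⊗ H`, `h ⊗ v ↦ Σ (h₁ · v) ⊗ h₂`. -/
noncomputable def twistTau (act : H ⊗[k] V →ₗ[k] V) :
    H ⊗[k] V →ₗ[k] V ⊗[k] H :=
  (TensorProduct.map act LinearMap.id)
    ∘ₗ (TensorProduct.assoc k H V H).symm.toLinearMap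
    ∘ₗ (TensorProduct.map LinearMap.id (TensorProduct.comm k H V).toLinearMap)
    ∘ₗ (TensorProduct.assoc k H H V).toLinearMap
    ∘ₗ (TensorProduct.map Coalgebra.comul LinearMap.id)

/-- The diagonal action of `H` on `V ⊗ V`. -/
noncomputable def diag2 (act : H ⊗[k] V →ₗ[k] V) :
    H ⊗[k] (V ⊗[k] V) →ₗ[k] V ⊗[k] V :=
  (TensorProduct.map act act)
    ∘ₗ (TensorProduct.tensorTensorTensorComm k H H V V).toLinearMap
    ∘ₗ (TensorProduct.map Coalgebra.comul LinearMap.id)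

/-- The span of the smash relations `h ⊗ v ⊗ 1 − 1 ⊗ τ(h ⊗ v)`, viewed inside `TF`. -/
noncomputable def smashSet (act : H ⊗[k] V →ₗ[k] V) : Set (TF k H V) :=
  (Submodule.span k {x | ∃ (h : H) (v : V),
    x = jH k H V h * jV k H V v - iVH k H V (twistTau k H V act (h ⊗ₜ[k] v))} :
      Submodule k (TF k H V))

end BialgebraPart

end PaperTH

end

open PaperTH

namespace Stmt9Aux

open TensorProduct Coalgebra

variable {k H V : Type*} [CommRing k] [Ring H] [Bialgebra k H]
  [AddCommGroup V] [Module k V]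
  (act : H ⊗[k] V →ₗ[k] V)

/-- Left-multiplication induction principle for the tensor algebra. -/
theorem leftInduction (S : Submodule k (TensorAlgebra k V)) (h1 : (1 : TensorAlgebra k V) ∈ S)
    (hL : ∀ (v : V) (x : TensorAlgebra k V), x ∈ S → TensorAlgebra.ι k v * x ∈ S)
    (x : TensorAlgebra k V) : x ∈ S := by
  have key : ∀ y ∈ S, x * y ∈ S := by
    induction x using TensorAlgebra.induction with
    | algebraMap r => intro y hy; rw [← Algebra.smul_def]; exact S.smul_mem r hy
    | ι v => intro y hy; exact hL v y hy
    | mul a b ha hb => intro y hy; rw [mul_assoc]; exact ha _ (hb _ hy)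
    | add a b ha hb => intro y hy; rw [add_mul]; exact S.add_mem (ha _ hy) (hb _ hy)
  simpa using key 1 h1

/-- `cact v h = act (h ⊗ v)`. -/
noncomputable def cact : V →ₗ[k] H →ₗ[k] V := (TensorProduct.curry act).flip

@[simp] lemma cact_apply (v : V) (h : H) : cact act v h = act (h ⊗ₜ[k] v) := rfl

/-- The operator `f ↦ (h ↦ Σ ι(h₁·v) * f h₂)`. -/
noncomputable def Lop :
    V →ₗ[k] Module.End k (H →ₗ[k] TensorAlgebra k V) :=
  LinearMap.mk₂ k (fun v f =>
    LinearMap.mul' k (TensorAlgebra k V) ∘ₗ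
      TensorProduct.map ((TensorAlgebra.ι k) ∘ₗ (cact act v)) f ∘ₗ Coalgebra.comul)
    (fun v v' f => by
      ext h
      simp [map_add, LinearMap.comp_add, TensorProduct.map_add_left, LinearMap.add_comp,
        LinearMap.add_apply])
    (fun c v f => by
      ext h
      simp [map_smul, LinearMap.comp_smul, TensorProduct.map_smul_left, LinearMap.smul_comp,
        LinearMap.smul_apply])
    (fun v f f' => by
      ext h
      simp [TensorProduct.map_add_right, LinearMap.add_comp, LinearMap.comp_add,
        LinearMap.add_apply])
    (fun c v f => by
      ext h
      simp [TensorProduct.map_smul_right, LinearMap.smul_comp, LinearMap.comp_smul,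
        LinearMap.smul_apply])

lemma Lop_apply_repr (v : V) (f : H →ₗ[k] TensorAlgebra k V) {h : H} {ι : Type*} (r : Coalgebra.Repr k h ι) :
    Lop act v f h = ∑ i ∈ r.index,
      TensorAlgebra.ι k (act (r.left i ⊗ₜ[k] v)) * f (r.right i) := by
  show (LinearMap.mul' k (TensorAlgebra k V))
      (TensorProduct.map ((TensorAlgebra.ι k) ∘ₗ (cact act v)) f (Coalgebra.comul h)) = _
  rw [← r.eq]
  simp [map_sum]

lemma Lop_apply_one (hone : ∀ v : V, act ((1 : H) ⊗ₜ[k] v) = v)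
    (v : V) (f : H →ₗ[k] TensorAlgebra k V) :
    Lop act v f 1 = TensorAlgebra.ι k v * f 1 := by
  show (LinearMap.mul' k (TensorAlgebra k V))
      (TensorProduct.map ((TensorAlgebra.ι k) ∘ₗ (cact act v)) f (Coalgebra.comul (1 : H))) = _
  rw [Bialgebra.comul_one, Algebra.TensorProduct.one_def]
  simp [hone]

/-- `eH h = ε h • 1`. -/
noncomputable def eH : H →ₗ[k] TensorAlgebra k V :=
  (Algebra.linearMap k (TensorAlgebra k V)) ∘ₗ Coalgebra.counit

@[simp] lemma eH_apply (h : H) :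
    (eH : H →ₗ[k] TensorAlgebra k V) h = Coalgebra.counit (R := k) h • 1 := by
  simp [eH, Algebra.algebraMap_eq_smul_one]

/-- The algebra map `T(V) → End(Hom(H, T(V)))` generated by `Lop`. -/
noncomputable def Theta : TensorAlgebra k V →ₐ[k] Module.End k (H →ₗ[k] TensorAlgebra k V) :=
  TensorAlgebra.lift k (Lop act)

/-- `G x h = "h · x"`, the diagonal action of `H` on `T(V)`, curried. -/
noncomputable def G : TensorAlgebra k V →ₗ[k] (H →ₗ[k] TensorAlgebra k V) where
  toFun x := Theta act x (eH)
  map_add' x y := by simp [map_add]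
  map_smul' c x := by simp [map_smul]

@[simp] lemma G_one : G act (1 : TensorAlgebra k V) = eH := by
  simp [G, map_one, Module.End.one_apply]

lemma G_ι_mul (v : V) (x : TensorAlgebra k V) :
    G act (TensorAlgebra.ι k v * x) = Lop act v (G act x) := by
  simp [G, map_mul, Theta, TensorAlgebra.lift_ι_apply, Module.End.mul_apply]

end Stmt9Aux
namespace Stmt9Aux

variable {k H V : Type*} [CommRing k] [Ring H] [Bialgebra k H]
  [AddCommGroup V] [Module k V]
  (act : H ⊗[k] V →ₗ[k] V)

/-- Product of Sweedler representations. -/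
noncomputable def reprMul {a b : H} {ι κ : Type*} (ra : Coalgebra.Repr k a ι) (rb : Coalgebra.Repr k b κ) :
    Coalgebra.Repr k (a * b) (ι × κ) where
  index := ra.index ×ˢ rb.index
  left := fun p => ra.left p.1 * rb.left p.2
  right := fun p => ra.right p.1 * rb.right p.2
  eq := by
    rw [Finset.sum_product]
    rw [Bialgebra.comul_mul, ← ra.eq, ← rb.eq, Finset.sum_mul_sum]
    simp [Algebra.TensorProduct.tmul_mul_tmul]

lemma counit_smul_sum {h : H} {ι : Type*} (r : Coalgebra.Repr k h ι) :
    ∑ i ∈ r.index, Coalgebra.counit (R := k) (r.left i) • r.right i = h := by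
  have h2 := congrArg (TensorProduct.lid k H) (Coalgebra.sum_counit_tmul_eq r)
  simp only [map_sum, TensorProduct.lid_tmul] at h2
  simpa using h2

lemma G_apply_one (hone : ∀ v : V, act ((1 : H) ⊗ₜ[k] v) = v) (x : TensorAlgebra k V) :
    G act x 1 = x := by
  let S : Submodule k (TensorAlgebra k V) :=
    { carrier := {x | G act x 1 = x}
      add_mem' := fun {a b} ha hb => by
        simp only [Set.mem_setOf_eq, map_add, LinearMap.add_apply] at *
        rw [ha, hb]
      zero_mem' := by simp
      smul_mem' := fun c a ha => by
        simp only [Set.mem_setOf_eq, map_smul, LinearMap.smul_apply] at *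
        rw [ha] }
  refine leftInduction S ?_ ?_ x
  · show G act 1 1 = 1
    simp
  · intro v y hy
    show G act (TensorAlgebra.ι k v * y) 1 = TensorAlgebra.ι k v * y
    rw [G_ι_mul, Lop_apply_one act hone, hy]

lemma G_mul_apply (hmul : ∀ (h h' : H) (v : V),
      act ((h * h') ⊗ₜ[k] v) = act (h ⊗ₜ[k] act (h' ⊗ₜ[k] v)))
    (x : TensorAlgebra k V) (h h' : H) :
    G act x (h * h') = G act (G act x h') h := by
  let S : Submodule k (TensorAlgebra k V) :=
    { carrier := {x | ∀ h h' : H, G act x (h * h') = G act (G act x h') h}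
      add_mem' := fun {a b} ha hb h h' => by
        simp only [map_add, LinearMap.add_apply]
        rw [ha, hb]
      zero_mem' := by simp
      smul_mem' := fun c a ha h h' => by
        simp only [map_smul, LinearMap.smul_apply]
        rw [ha] }
  refine leftInduction S ?_ ?_ x h h'
  · intro h h'
    show G act 1 (h * h') = G act (G act 1 h') h
    simp [map_smul, smul_smul, mul_comm]
  · intro v y hy h h'
    show G act (TensorAlgebra.ι k v * y) (h * h')
        = G act (G act (TensorAlgebra.ι k v * y) h') h
    have hy' : ∀ a b : H, G act y (a * b) = G act (G act y b) a := hy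
    set ra := Coalgebra.Repr.arbitrary k h with hra
    set rb := Coalgebra.Repr.arbitrary k h' with hrb
    rw [G_ι_mul, Lop_apply_repr act v (G act y) (reprMul ra rb)]
    rw [Lop_apply_repr act v (G act y) rb]
    rw [map_sum, LinearMap.sum_apply]
    have rhs : ∀ j, G act (TensorAlgebra.ι k (act (rb.left j ⊗ₜ[k] v)) * G act y (rb.right j)) h
        = ∑ i ∈ ra.index, TensorAlgebra.ι k (act (ra.left i ⊗ₜ[k] act (rb.left j ⊗ₜ[k] v)))
            * G act (G act y (rb.right j)) (ra.right i) := by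
      intro j
      rw [G_ι_mul, Lop_apply_repr act _ _ ra]
    rw [Finset.sum_congr rfl fun j _ => rhs j]
    rw [Finset.sum_comm]
    unfold reprMul
    rw [Finset.sum_product]
    refine Finset.sum_congr rfl fun i _ => Finset.sum_congr rfl fun j _ => ?_
    rw [hmul, hy']

end Stmt9Aux
namespace Stmt9Aux

set_option synthInstance.maxHeartbeats 1000000
set_option maxHeartbeats 1000000

variable {k H V : Type*} [CommRing k] [Ring H] [Bialgebra k H]
  [AddCommGroup V] [Module k V]
  (act : H ⊗[k] V →ₗ[k] V)

/-- `DG (h ⊗ x) = G x h`. -/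
noncomputable def DG : H ⊗[k] TensorAlgebra k V →ₗ[k] TensorAlgebra k V :=
  TensorProduct.lift (G act).flip

@[simp] lemma DG_tmul (h : H) (x : TensorAlgebra k V) :
    DG act (h ⊗ₜ[k] x) = G act x h := rfl

/-- The `H`-operators on `M = T(V) ⊗ H`. -/
noncomputable def Aop : H →ₗ[k] Module.End k (TensorAlgebra k V ⊗[k] H) :=
  TensorProduct.curry <|
    (TensorProduct.map (DG act) (LinearMap.mul' k H))
      ∘ₗ (TensorProduct.tensorTensorTensorComm k H H (TensorAlgebra k V) H).toLinearMap
      ∘ₗ (TensorProduct.map Coalgebra.comul LinearMap.id)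

lemma Aop_apply_repr {h : H} {ι : Type*} (r : Coalgebra.Repr k h ι) (x : TensorAlgebra k V) (c : H) :
    Aop act h (x ⊗ₜ[k] c) = ∑ i ∈ r.index, G act x (r.left i) ⊗ₜ[k] (r.right i * c) := by
  show (TensorProduct.map (DG act) (LinearMap.mul' k H))
      ((TensorProduct.tensorTensorTensorComm k H H (TensorAlgebra k V) H)
        ((TensorProduct.map Coalgebra.comul LinearMap.id) (h ⊗ₜ[k] (x ⊗ₜ[k] c)))) = _
  rw [TensorProduct.map_tmul, LinearMap.id_apply, ← r.eq, TensorProduct.sum_tmul]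
  rw [map_sum, map_sum]
  refine Finset.sum_congr rfl fun i _ => ?_
  rw [TensorProduct.tensorTensorTensorComm_tmul, TensorProduct.map_tmul]
  rfl

lemma Aop_one_tmul (hone : ∀ v : V, act ((1 : H) ⊗ₜ[k] v) = v) (x : TensorAlgebra k V) (c : H) :
    Aop act 1 (x ⊗ₜ[k] c) = x ⊗ₜ[k] c := by
  show (TensorProduct.map (DG act) (LinearMap.mul' k H))
      ((TensorProduct.tensorTensorTensorComm k H H (TensorAlgebra k V) H)
        ((TensorProduct.map Coalgebra.comul LinearMap.id) ((1:H) ⊗ₜ[k] (x ⊗ₜ[k] c)))) = _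
  rw [TensorProduct.map_tmul, LinearMap.id_apply, Bialgebra.comul_one,
    Algebra.TensorProduct.one_def, TensorProduct.tensorTensorTensorComm_tmul,
    TensorProduct.map_tmul]
  simp [G_apply_one act hone]

lemma Aop_one (hone : ∀ v : V, act ((1 : H) ⊗ₜ[k] v) = v) :
    Aop act (1 : H) = (1 : Module.End k (TensorAlgebra k V ⊗[k] H)) := by
  apply TensorProduct.ext'
  intro x c
  rw [Aop_one_tmul act hone]
  rfl

lemma Aop_mul (hmul : ∀ (h h' : H) (v : V),
      act ((h * h') ⊗ₜ[k] v) = act (h ⊗ₜ[k] act (h' ⊗ₜ[k] v)))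
    (h h' : H) :
    Aop act (h * h') = Aop act h * Aop act h' := by
  apply TensorProduct.ext'
  intro x c
  set ra := Coalgebra.Repr.arbitrary k h
  set rb := Coalgebra.Repr.arbitrary k h'
  rw [Module.End.mul_apply, Aop_apply_repr act rb x c, map_sum]
  have step : ∀ j ∈ rb.index,
      Aop act h (G act x (rb.left j) ⊗ₜ[k] (rb.right j * c))
        = ∑ i ∈ ra.index, G act (G act x (rb.left j)) (ra.left i)
            ⊗ₜ[k] (ra.right i * (rb.right j * c)) :=
    fun j _ => Aop_apply_repr act ra _ _
  rw [Finset.sum_congr rfl step, Aop_apply_repr act (reprMul ra rb) x c]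
  unfold reprMul
  rw [Finset.sum_product, Finset.sum_comm]
  refine Finset.sum_congr rfl fun j _ => Finset.sum_congr rfl fun i _ => ?_
  rw [G_mul_apply act hmul, mul_assoc]

end Stmt9Aux
namespace Stmt9Aux

open TensorProduct Coalgebra

set_option synthInstance.maxHeartbeats 1000000
set_option maxHeartbeats 1000000

variable {k H V : Type*} [CommRing k] [Ring H] [Bialgebra k H]
  [AddCommGroup V] [Module k V]
  (act : H ⊗[k] V →ₗ[k] V)

/-- The `V`-operators on `M = T(V) ⊗ H`: left multiplication in the first factor. -/
noncomputable def Bop : V →ₗ[k] Module.End k (TensorAlgebra k V ⊗[k] H) :=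
  (LinearMap.rTensorHom H) ∘ₗ (LinearMap.mul k (TensorAlgebra k V)) ∘ₗ (TensorAlgebra.ι k)

@[simp] lemma Bop_tmul (v : V) (x : TensorAlgebra k V) (c : H) :
    Bop (k := k) (H := H) v (x ⊗ₜ[k] c) = (TensorAlgebra.ι k v * x) ⊗ₜ[k] c := rfl

/-- The bilinear map `(w, b) ↦ Bop w * Aop b`. -/
noncomputable def BAop : V ⊗[k] H →ₗ[k] Module.End k (TensorAlgebra k V ⊗[k] H) :=
  (LinearMap.mul' k (Module.End k (TensorAlgebra k V ⊗[k] H)))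
    ∘ₗ TensorProduct.map (Bop (k := k) (H := H)) (Aop act)

@[simp] lemma BAop_tmul (w : V) (b : H) :
    BAop act (w ⊗ₜ[k] b) = Bop (k := k) (H := H) w * Aop act b := by
  simp [BAop]

lemma twistTau_repr {h : H} {ι : Type*} (v : V) (r : Coalgebra.Repr k h ι) :
    twistTau k H V act (h ⊗ₜ[k] v)
      = ∑ i ∈ r.index, act (r.left i ⊗ₜ[k] v) ⊗ₜ[k] r.right i := by
  have e0 : twistTau k H V act (h ⊗ₜ[k] v)
      = (TensorProduct.map act LinearMap.id)
          ((TensorProduct.assoc k H V H).symm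
            ((TensorProduct.map LinearMap.id (TensorProduct.comm k H V).toLinearMap)
              ((TensorProduct.assoc k H H V)
                ((Coalgebra.comul h) ⊗ₜ[k] v)))) := rfl
  rw [e0, ← r.eq, TensorProduct.sum_tmul, map_sum, map_sum, map_sum, map_sum]
  refine Finset.sum_congr rfl fun i _ => ?_
  simp

lemma Aop_smash (v : V) (h : H) :
    Aop act h * Bop (k := k) (H := H) v = BAop act (twistTau k H V act (h ⊗ₜ[k] v)) := by
  apply TensorProduct.ext'
  intro x c
  set ra := ℛ k h with hra
  rw [Module.End.mul_apply, Bop_tmul, Aop_apply_repr act ra]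
  have lstep : ∀ i ∈ ra.index,
      G act (TensorAlgebra.ι k v * x) (ra.left i) ⊗ₜ[k] (ra.right i * c)
        = ∑ j ∈ (ℛ k (ra.left i)).index,
            (TensorAlgebra.ι k (act ((ℛ k (ra.left i)).left j ⊗ₜ[k] v))
              * G act x ((ℛ k (ra.left i)).right j)) ⊗ₜ[k] (ra.right i * c) := by
    intro i _
    rw [G_ι_mul, Lop_apply_repr act v (G act x) (ℛ k (ra.left i)), TensorProduct.sum_tmul]
  rw [Finset.sum_congr rfl lstep]
  rw [twistTau_repr act v ra, map_sum, LinearMap.sum_apply]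
  have rstep : ∀ i ∈ ra.index,
      (BAop act (act (ra.left i ⊗ₜ[k] v) ⊗ₜ[k] ra.right i)) (x ⊗ₜ[k] c)
        = ∑ j ∈ (ℛ k (ra.right i)).index,
            (TensorAlgebra.ι k (act (ra.left i ⊗ₜ[k] v))
              * G act x ((ℛ k (ra.right i)).left j)) ⊗ₜ[k] ((ℛ k (ra.right i)).right j * c) := by
    intro i _
    rw [BAop_tmul, Module.End.mul_apply, Aop_apply_repr act (ℛ k (ra.right i)), map_sum]
    refine Finset.sum_congr rfl fun j _ => ?_
    rw [Bop_tmul]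
  rw [Finset.sum_congr rfl rstep]
  -- bridge by coassociativity
  have key := congrArg
    ((TensorProduct.map
        ((LinearMap.mul' k (TensorAlgebra k V))
          ∘ₗ TensorProduct.map ((TensorAlgebra.ι k) ∘ₗ cact act v) (G act x))
        (LinearMap.mulRight k c))
      ∘ₗ (TensorProduct.assoc k H H H).symm.toLinearMap)
    (Coalgebra.sum_tmul_tmul_eq ra (fun i => ℛ k (ra.left i)) (fun i => ℛ k (ra.right i)))
  simp only [map_sum, LinearMap.coe_comp, Function.comp_apply, LinearEquiv.coe_coe,
    TensorProduct.assoc_symm_tmul, TensorProduct.map_tmul, LinearMap.mul'_apply,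
    LinearMap.mulRight_apply, cact_apply] at key
  exact key

end Stmt9Aux
namespace Stmt9Aux

open TensorProduct Coalgebra

set_option synthInstance.maxHeartbeats 1000000
set_option maxHeartbeats 1000000

variable {k H V : Type*} [CommRing k] [Ring H] [Bialgebra k H]
  [AddCommGroup V] [Module k V]
  (act : H ⊗[k] V →ₗ[k] V)

/-- The representation of the free algebra on `M = T(V) ⊗ H`. -/
noncomputable def Phi : TF k H V →ₐ[k] Module.End k (TensorAlgebra k V ⊗[k] H) :=
  TensorAlgebra.lift k
    ((Aop act) ∘ₗ (LinearMap.fst k H V) + (Bop (k := k) (H := H)) ∘ₗ (LinearMap.snd k H V))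

@[simp] lemma Phi_jH (h : H) : Phi act (jH k H V h) = Aop act h := by
  simp [Phi, jH, TensorAlgebra.lift_ι_apply]

@[simp] lemma Phi_jV (v : V) : Phi act (jV k H V v) = Bop (k := k) (H := H) v := by
  simp [Phi, jV, TensorAlgebra.lift_ι_apply]

lemma Phi_iVH (u : V ⊗[k] H) : Phi act (iVH k H V u) = BAop act u := by
  have h0 : (Phi act).toLinearMap ∘ₗ iVH k H V = BAop act := by
    apply TensorProduct.ext'
    intro w b
    show Phi act ((LinearMap.mul' k (TF k H V))
      (TensorProduct.map (jV k H V) (jH k H V) (w ⊗ₜ[k] b))) = _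
    rw [TensorProduct.map_tmul, LinearMap.mul'_apply, map_mul, Phi_jV, Phi_jH, BAop_tmul]
  exact LinearMap.congr_fun h0 u

lemma phi_rel (hone : ∀ v : V, act ((1 : H) ⊗ₜ[k] v) = v)
    (hmul : ∀ (h h' : H) (v : V),
      act ((h * h') ⊗ₜ[k] v) = act (h ⊗ₜ[k] act (h' ⊗ₜ[k] v))) :
    ∀ ⦃x y : TF k H V⦄, presRel k H V (smashSet k H V act) x y →
      Phi act x = Phi act y := by
  intro x y hxy
  induction hxy with
  | mulH h h' => rw [map_mul, Phi_jH, Phi_jH, Phi_jH, ← Aop_mul act hmul]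
  | oneH => rw [Phi_jH, Aop_one act hone, map_one]
  | mem hx =>
    rw [map_zero]
    refine Submodule.span_induction ?_ ?_ ?_ ?_ hx
    · rintro z ⟨h, v, rfl⟩
      rw [map_sub, map_mul, Phi_jH, Phi_jV, Phi_iVH, Aop_smash act v h, sub_self]
    · rw [map_zero]
    · intro a b _ _ ha hb
      rw [map_add, ha, hb, add_zero]
    · intro c a _ ha
      rw [map_smul, ha, smul_zero]

/-- The induced representation of the quotient algebra. -/
noncomputable def PhiQ (hone : ∀ v : V, act ((1 : H) ⊗ₜ[k] v) = v)
    (hmul : ∀ (h h' : H) (v : V),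
      act ((h * h') ⊗ₜ[k] v) = act (h ⊗ₜ[k] act (h' ⊗ₜ[k] v))) :
    RingQuot (presRel k H V (smashSet k H V act))
      →ₐ[k] Module.End k (TensorAlgebra k V ⊗[k] H) :=
  RingQuot.liftAlgHom k ⟨Phi act, phi_rel act hone hmul⟩

lemma PhiQ_mk (hone : ∀ v : V, act ((1 : H) ⊗ₜ[k] v) = v)
    (hmul : ∀ (h h' : H) (v : V),
      act ((h * h') ⊗ₜ[k] v) = act (h ⊗ₜ[k] act (h' ⊗ₜ[k] v)))
    (x : TF k H V) :
    PhiQ act hone hmul (RingQuot.mkAlgHom k (presRel k H V (smashSet k H V act)) x)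
      = Phi act x := by
  simp [PhiQ, RingQuot.liftAlgHom_mkAlgHom_apply]

end Stmt9Aux
namespace Stmt9Aux

open TensorProduct Coalgebra

set_option synthInstance.maxHeartbeats 1000000
set_option maxHeartbeats 1000000

variable {k H V : Type*} [CommRing k] [Ring H] [Bialgebra k H]
  [AddCommGroup V] [Module k V]
  (act : H ⊗[k] V →ₗ[k] V)

/-- The embedding `T(V) → T(H × V)` sending `ι v` to `jV v`. -/
noncomputable def PtoTF : TensorAlgebra k V →ₐ[k] TF k H V :=
  TensorAlgebra.lift k (jV k H V)

@[simp] lemma PtoTF_ι (v : V) : PtoTF (TensorAlgebra.ι k v) = jV k H V v := by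
  simp [PtoTF, TensorAlgebra.lift_ι_apply]

/-- The degree-`m` monomial map `V^{⊗m} → T(H × V)`. -/
noncomputable def mon (m : ℕ) : (⨂[k]^m V) →ₗ[k] TF k H V :=
  (PtoTF (H := H)).toLinearMap ∘ₗ TensorPower.toTensorAlgebra

lemma mon_tprod (m : ℕ) (w : Fin m → V) :
    mon (H := H) m (PiTensorProduct.tprod k w)
      = (List.ofFn fun i => jV k H V (w i)).prod := by
  rw [mon, LinearMap.comp_apply, TensorPower.toTensorAlgebra_tprod,
    TensorAlgebra.tprod_apply]
  show PtoTF _ = _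
  rw [map_list_prod, List.map_ofFn]
  exact congrArg List.prod (congrArg List.ofFn (funext fun i => by simp))

/-- `φ_m : V^{⊗m} ⊗ H → T(H×V)/(R')`. -/
noncomputable def phiPow (m : ℕ) :
    ((⨂[k]^m V) ⊗[k] H) →ₗ[k] RingQuot (presRel k H V (smashSet k H V act)) :=
  (LinearMap.mul' k _) ∘ₗ TensorProduct.map
    ((RingQuot.mkAlgHom k (presRel k H V (smashSet k H V act))).toLinearMap ∘ₗ mon m)
    ((RingQuot.mkAlgHom k (presRel k H V (smashSet k H V act))).toLinearMap ∘ₗ jH k H V)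

lemma phiPow_tmul (m : ℕ) (x : ⨂[k]^m V) (h : H) :
    phiPow act m (x ⊗ₜ[k] h)
      = RingQuot.mkAlgHom k (presRel k H V (smashSet k H V act)) (mon m x)
        * RingQuot.mkAlgHom k (presRel k H V (smashSet k H V act)) (jH k H V h) := rfl

/-- The retraction `ψ`. -/
noncomputable def psi (hone : ∀ v : V, act ((1 : H) ⊗ₜ[k] v) = v)
    (hmul : ∀ (h h' : H) (v : V),
      act ((h * h') ⊗ₜ[k] v) = act (h ⊗ₜ[k] act (h' ⊗ₜ[k] v))) (n : ℕ) :
    RingQuot (presRel k H V (smashSet k H V act)) →ₗ[k] (⨂[k]^n V) ⊗[k] H :=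
  (LinearMap.rTensor H (DirectSum.component k ℕ (fun i => ⨂[k]^i V) n))
    ∘ₗ (LinearMap.rTensor H (TensorAlgebra.toDirectSum (R := k) (M := V)).toLinearMap)
    ∘ₗ (LinearMap.applyₗ ((1 : TensorAlgebra k V) ⊗ₜ[k] (1 : H)))
    ∘ₗ (PhiQ act hone hmul).toLinearMap

lemma Aop_one_tmul_right (h c : H) :
    Aop act h ((1 : TensorAlgebra k V) ⊗ₜ[k] c) = (1 : TensorAlgebra k V) ⊗ₜ[k] (h * c) := by
  rw [Aop_apply_repr act (ℛ k h)]
  have step : ∀ i ∈ (ℛ k h).index,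
      G act (1 : TensorAlgebra k V) ((ℛ k h).left i) ⊗ₜ[k] ((ℛ k h).right i * c)
        = (1 : TensorAlgebra k V)
            ⊗ₜ[k] (Coalgebra.counit (R := k) ((ℛ k h).left i) • ((ℛ k h).right i * c)) := by
    intro i _
    rw [G_one, eH_apply, TensorProduct.smul_tmul]
  rw [Finset.sum_congr rfl step, ← TensorProduct.tmul_sum]
  congr 1
  calc ∑ i ∈ (ℛ k h).index,
        Coalgebra.counit (R := k) ((ℛ k h).left i) • ((ℛ k h).right i * c)
      = (∑ i ∈ (ℛ k h).index,
          Coalgebra.counit (R := k) ((ℛ k h).left i) • (ℛ k h).right i) * c := by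
        rw [Finset.sum_mul]
        exact Finset.sum_congr rfl fun i _ => (smul_mul_assoc _ _ _).symm
    _ = h * c := by rw [counit_smul_sum]

lemma listBop_prod : ∀ (m : ℕ) (w : Fin m → V) (x : TensorAlgebra k V) (c : H),
    (List.ofFn fun i => Bop (k := k) (H := H) (w i)).prod (x ⊗ₜ[k] c)
      = ((List.ofFn fun i => TensorAlgebra.ι k (w i)).prod * x) ⊗ₜ[k] c := by
  intro m
  induction m with
  | zero => intro w x c; simp [List.ofFn_zero]
  | succ m ih =>
    intro w x c
    rw [List.ofFn_succ, List.ofFn_succ, List.prod_cons, List.prod_cons,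
      Module.End.mul_apply, ih (fun i => w i.succ), Bop_tmul, mul_assoc]

lemma psi_phiPow (hone : ∀ v : V, act ((1 : H) ⊗ₜ[k] v) = v)
    (hmul : ∀ (h h' : H) (v : V),
      act ((h * h') ⊗ₜ[k] v) = act (h ⊗ₜ[k] act (h' ⊗ₜ[k] v))) (n : ℕ)
    (z : (⨂[k]^n V) ⊗[k] H) :
    psi act hone hmul n (phiPow act n z) = z := by
  have key : ∀ (w : Fin n → V) (h : H),
      psi act hone hmul n (phiPow act n ((PiTensorProduct.tprod k w) ⊗ₜ[k] h))
        = (PiTensorProduct.tprod k w) ⊗ₜ[k] h := by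
    intro w h
    rw [phiPow_tmul, ← map_mul, psi]
    simp only [LinearMap.comp_apply, AlgHom.toLinearMap_apply]
    rw [PhiQ_mk act hone hmul, map_mul, mon_tprod]
    have e1 : Phi act ((List.ofFn fun i => jV k H V (w i)).prod)
        = (List.ofFn fun i => Bop (k := k) (H := H) (w i)).prod := by
      rw [map_list_prod, List.map_ofFn]
      exact congrArg List.prod (congrArg List.ofFn (funext fun i => by simp))
    rw [e1, LinearMap.applyₗ_apply_apply]
    rw [Module.End.mul_apply, Phi_jH, Aop_one_tmul_right, mul_one, listBop_prod, mul_one]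
    rw [LinearMap.rTensor_tmul, ← TensorAlgebra.tprod_apply]
    show (LinearMap.rTensor H (DirectSum.component k ℕ (fun i => ⨂[k]^i V) n))
        ((TensorAlgebra.toDirectSum (TensorAlgebra.tprod k V n w)) ⊗ₜ[k] h) = _
    rw [TensorAlgebra.toDirectSum_tensorPower_tprod, LinearMap.rTensor_tmul,
      ← DirectSum.lof_eq_of k, DirectSum.component.lof_self]
  induction z using TensorProduct.induction_on with
  | zero => simp
  | tmul x h =>
    induction x using PiTensorProduct.induction_on with
    | smul_tprod r w =>
      rw [← TensorProduct.smul_tmul', map_smul, map_smul, key]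
    | add a b ha hb =>
      rw [TensorProduct.add_tmul, map_add, map_add, ha, hb]
  | add a b ha hb => rw [map_add, map_add, ha, hb]

end Stmt9Aux
namespace Stmt9Aux

open TensorProduct Coalgebra

set_option synthInstance.maxHeartbeats 1000000
set_option maxHeartbeats 1000000

variable {k H V : Type*} [CommRing k] [Ring H] [Bialgebra k H]
  [AddCommGroup V] [Module k V]
  (act : H ⊗[k] V →ₗ[k] V)

local notation "π" => RingQuot.mkAlgHom k (presRel k H V (smashSet k H V act))
local notation "πl" => AlgHom.toLinearMap (RingQuot.mkAlgHom k (presRel k H V (smashSet k H V act)))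

lemma mk_jH_mul (h h' : H) :
    π (jH k H V h) * π (jH k H V h') = π (jH k H V (h * h')) :=
  ((map_mul π _ _).symm).trans (RingQuot.mkAlgHom_rel k (presRel.mulH h h'))

lemma mk_jH_one : π (jH k H V (1 : H)) = 1 :=
  (RingQuot.mkAlgHom_rel k presRel.oneH).trans (map_one π)

lemma mk_smash (h : H) (v : V) :
    π (jH k H V h) * π (jV k H V v)
      = π (iVH k H V (twistTau k H V act (h ⊗ₜ[k] v))) := by
  have h0 : π (jH k H V h * jV k H V v
      - iVH k H V (twistTau k H V act (h ⊗ₜ[k] v))) = π 0 :=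
    RingQuot.mkAlgHom_rel k (presRel.mem (Submodule.subset_span ⟨h, v, rfl⟩))
  rw [map_zero, map_sub, sub_eq_zero, map_mul] at h0
  exact h0

lemma iVH_tmul (w : V) (b : H) :
    iVH k H V (w ⊗ₜ[k] b) = jV k H V w * jH k H V b := rfl

lemma mk_iVH_mem (u : V ⊗[k] H) :
    π (iVH k H V u) ∈ LinearMap.range (πl ∘ₗ jV k H V)
      * LinearMap.range (πl ∘ₗ jH k H V) := by
  induction u using TensorProduct.induction_on with
  | zero => rw [map_zero, map_zero]; exact Submodule.zero_mem _
  | tmul w b =>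
    rw [iVH_tmul, map_mul]
    exact Submodule.mul_mem_mul ⟨w, rfl⟩ ⟨b, rfl⟩
  | add a b ha hb =>
    rw [map_add, map_add]
    exact Submodule.add_mem _ ha hb

lemma comm_le :
    LinearMap.range (πl ∘ₗ jH k H V)
        * LinearMap.range (πl ∘ₗ jV k H V)
      ≤ LinearMap.range (πl ∘ₗ jV k H V)
        * LinearMap.range (πl ∘ₗ jH k H V) := by
  rw [Submodule.mul_le]
  rintro _ ⟨h, rfl⟩ _ ⟨v, rfl⟩
  show π (jH k H V h) * π (jV k H V v) ∈ _
  rw [mk_smash]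
  exact mk_iVH_mem act _

lemma JhJh_le :
    LinearMap.range (πl ∘ₗ jH k H V)
        * LinearMap.range (πl ∘ₗ jH k H V)
      ≤ LinearMap.range (πl ∘ₗ jH k H V) := by
  rw [Submodule.mul_le]
  rintro _ ⟨h, rfl⟩ _ ⟨h', rfl⟩
  exact ⟨h * h', (mk_jH_mul act h h').symm⟩

lemma Jh_eq :
    Submodule.map πl (HF k H V)
      = LinearMap.range (πl ∘ₗ jH k H V) := by
  apply le_antisymm
  · rw [HF, Submodule.map_sup]
    refine sup_le ?_ ?_
    · rw [LinearMap.range_comp]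
    · rw [Submodule.one_eq_span, Submodule.map_span]
      refine Submodule.span_le.mpr ?_
      rintro _ ⟨y, hy, rfl⟩
      rcases Set.mem_singleton_iff.mp hy with rfl
      exact ⟨1, by rw [LinearMap.comp_apply]; simp [mk_jH_one act]⟩
  · rw [LinearMap.range_comp]
    exact Submodule.map_mono (le_sup_left.trans_eq rfl)

lemma Jv_eq :
    Submodule.map πl (VF k H V)
      = LinearMap.range (πl ∘ₗ jV k H V) := by
  rw [VF, LinearMap.range_comp]

lemma pushH : ∀ m : ℕ,
    LinearMap.range (πl ∘ₗ jH k H V)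
        * (LinearMap.range (πl ∘ₗ jV k H V)
            * LinearMap.range (πl ∘ₗ jH k H V)) ^ m
      ≤ (LinearMap.range (πl ∘ₗ jV k H V)) ^ m
          * LinearMap.range (πl ∘ₗ jH k H V) := by
  intro m
  set Jh := LinearMap.range (πl ∘ₗ jH k H V)
  set Jv := LinearMap.range (πl ∘ₗ jV k H V)
  induction m with
  | zero => rw [pow_zero, pow_zero, mul_one, one_mul]
  | succ m ih =>
    calc Jh * (Jv * Jh) ^ (m + 1)
        = ((Jh * Jv) * Jh) * (Jv * Jh) ^ m := by
          rw [pow_succ', ← mul_assoc, ← mul_assoc]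
      _ ≤ ((Jv * Jh) * Jh) * (Jv * Jh) ^ m :=
          mul_le_mul' (mul_le_mul' (comm_le act) le_rfl) le_rfl
      _ = Jv * ((Jh * Jh) * (Jv * Jh) ^ m) := by rw [mul_assoc, mul_assoc, ← mul_assoc Jh Jh]
      _ ≤ Jv * (Jh * (Jv * Jh) ^ m) :=
          mul_le_mul' le_rfl (mul_le_mul' (JhJh_le act) le_rfl)
      _ ≤ Jv * (Jv ^ m * Jh) := mul_le_mul' le_rfl ih
      _ = Jv ^ (m + 1) * Jh := by rw [← mul_assoc, ← pow_succ']

end Stmt9Aux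
namespace Stmt9Aux

open TensorProduct Coalgebra

set_option synthInstance.maxHeartbeats 1000000
set_option maxHeartbeats 1000000

variable {k H V : Type*} [CommRing k] [Ring H] [Bialgebra k H]
  [AddCommGroup V] [Module k V]
  (act : H ⊗[k] V →ₗ[k] V)

local notation "π" => RingQuot.mkAlgHom k (presRel k H V (smashSet k H V act))
local notation "πl" => AlgHom.toLinearMap (RingQuot.mkAlgHom k (presRel k H V (smashSet k H V act)))

lemma prepend_mem (m : ℕ) (v : V) (z : (⨂[k]^m V) ⊗[k] H) :
    π (jV k H V v) * phiPow act m z ∈ LinearMap.range (phiPow act (m + 1)) := by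
  induction z using TensorProduct.induction_on with
  | zero => rw [map_zero, mul_zero]; exact Submodule.zero_mem _
  | tmul x h =>
    induction x using PiTensorProduct.induction_on with
    | smul_tprod r w =>
      rw [← TensorProduct.smul_tmul', map_smul, mul_smul_comm]
      refine Submodule.smul_mem _ r ?_
      refine ⟨(PiTensorProduct.tprod k (Fin.cons v w)) ⊗ₜ[k] h, ?_⟩
      rw [phiPow_tmul, phiPow_tmul, mon_tprod, mon_tprod, List.ofFn_succ, List.prod_cons,
        Fin.cons_zero]
      simp only [Fin.cons_succ]
      rw [map_mul, mul_assoc]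
    | add a b ha hb =>
      rw [TensorProduct.add_tmul, map_add, mul_add]
      exact Submodule.add_mem _ ha hb
  | add a b ha hb =>
    rw [map_add, mul_add]
    exact Submodule.add_mem _ ha hb

lemma toRange : ∀ m : ℕ,
    (LinearMap.range (πl ∘ₗ jV k H V)) ^ m * LinearMap.range (πl ∘ₗ jH k H V)
      ≤ LinearMap.range (phiPow act m) := by
  intro m
  induction m with
  | zero =>
    rw [pow_zero, one_mul]
    rintro _ ⟨h, rfl⟩
    refine ⟨(PiTensorProduct.tprod k (fun i : Fin 0 => (i.elim0 : V))) ⊗ₜ[k] h, ?_⟩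
    rw [phiPow_tmul, mon_tprod]
    simp [List.ofFn_zero]
  | succ m ih =>
    rw [pow_succ', mul_assoc]
    refine Submodule.mul_le.mpr ?_
    rintro _ ⟨v, rfl⟩ y hy
    obtain ⟨z, hz⟩ := ih hy
    rw [← hz]
    exact prepend_mem act m v z

lemma VF_mul_gradeF_le (m : ℕ) :
    VF k H V * gradeF k H V m ≤ gradeF k H V (m + 1) := by
  rw [gradeF, gradeF, ← mul_assoc, ← pow_succ']
  conv_lhs => rw [← one_mul ((VF k H V * HF k H V) ^ (m + 1))]
  refine mul_le_mul' ?_ le_rfl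
  rw [HF]
  exact le_sup_right

lemma memGrade : ∀ (m : ℕ) (w : Fin m → V) (h : H),
    (List.ofFn fun i => jV k H V (w i)).prod * jH k H V h ∈ gradeF k H V m := by
  intro m
  induction m with
  | zero =>
    intro w h
    rw [List.ofFn_zero, List.prod_nil, one_mul, gradeF, pow_zero, mul_one]
    exact Submodule.mem_sup_left (LinearMap.mem_range_self _ h)
  | succ m ih =>
    intro w h
    rw [List.ofFn_succ, List.prod_cons, mul_assoc]
    exact VF_mul_gradeF_le m
      (Submodule.mul_mem_mul (LinearMap.mem_range_self _ (w 0)) (ih (fun i => w i.succ) h))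

lemma rangeIn (m : ℕ) :
    LinearMap.range (phiPow act m) ≤ Submodule.map πl (gradeF k H V m) := by
  rintro _ ⟨z, rfl⟩
  induction z using TensorProduct.induction_on with
  | zero => rw [map_zero]; exact Submodule.zero_mem _
  | tmul x h =>
    induction x using PiTensorProduct.induction_on with
    | smul_tprod r w =>
      rw [← TensorProduct.smul_tmul', map_smul]
      refine Submodule.smul_mem _ r ⟨_, memGrade m w h, ?_⟩
      rw [phiPow_tmul, mon_tprod]
      simp [map_mul]
    | add a b ha hb =>
      rw [TensorProduct.add_tmul, map_add]
      exact Submodule.add_mem _ ha hb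
  | add a b ha hb =>
    rw [map_add]
    exact Submodule.add_mem _ ha hb

lemma mapGrade_eq (m : ℕ) :
    Submodule.map πl (gradeF k H V m)
      = LinearMap.range (πl ∘ₗ jH k H V)
          * (LinearMap.range (πl ∘ₗ jV k H V) * LinearMap.range (πl ∘ₗ jH k H V)) ^ m := by
  rw [gradeF, Submodule.map_mul, Submodule.map_pow, Submodule.map_mul, Jh_eq, Jv_eq]

lemma rangeEq (m : ℕ) :
    LinearMap.range (phiPow act m) = Submodule.map πl (gradeF k H V m) := by
  refine le_antisymm (rangeIn act m) ?_
  rw [mapGrade_eq]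
  exact (pushH act m).trans (toRange act m)

end Stmt9Aux

open Stmt9Aux

/-- In `T_H(H⊗V⊗H)/(R')`, where `R'` is the span of the smash relations
`h ⊗ v ⊗ 1 − 1 ⊗ τ(h ⊗ v)`, the degree-`n` component is isomorphic, as a right
`H`-module, to the free right `H`-module `V^{⊗n} ⊗ H`; more precisely, modulo `(R')`
every element of the degree-`n` component is congruent to an element of
`(k1⊗V⊗k1)^{⊗(n-1)} ⊗_H (k1⊗V⊗H)`, i.e. the degree-`n` piece of the quotient lies in
`(image of V)^n * (image of H)`. -/
theorem stmt_9 {k H V : Type*} [Field k] [Ring H] [HopfAlgebra k H]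
    [AddCommGroup V] [Module k V] [Module.Finite k V]
    (act : H ⊗[k] V →ₗ[k] V)
    (hone : ∀ v : V, act ((1 : H) ⊗ₜ[k] v) = v)
    (hmul : ∀ (h h' : H) (v : V),
      act ((h * h') ⊗ₜ[k] v) = act (h ⊗ₜ[k] act (h' ⊗ₜ[k] v)))
    (n : ℕ) :
    (∃ e : ((⨂[k]^n V) ⊗[k] H) ≃ₗ[k]
        ↥(Submodule.map
            (RingQuot.mkAlgHom k (presRel k H V (smashSet k H V act))).toLinearMap
            (gradeF k H V n)),
      ∀ (x : ⨂[k]^n V) (h h' : H),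
        ((e (x ⊗ₜ[k] (h * h')) :
            RingQuot (presRel k H V (smashSet k H V act))))
          = (e (x ⊗ₜ[k] h) : RingQuot (presRel k H V (smashSet k H V act)))
            * (RingQuot.mkAlgHom k (presRel k H V (smashSet k H V act)) (jH k H V h'))) ∧
    Submodule.map (RingQuot.mkAlgHom k (presRel k H V (smashSet k H V act))).toLinearMap
        (gradeF k H V n)
      ≤ (Submodule.map
            (RingQuot.mkAlgHom k (presRel k H V (smashSet k H V act))).toLinearMap
            (VF k H V)) ^ n
        * Submodule.map
            (RingQuot.mkAlgHom k (presRel k H V (smashSet k H V act))).toLinearMap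
            (HF k H V) := by
  have hinj : Function.Injective (phiPow act n) := by
    intro a b hab
    have h2 := congrArg (psi act hone hmul n) hab
    rwa [psi_phiPow, psi_phiPow] at h2
  constructor
  · refine ⟨(LinearEquiv.ofInjective (phiPow act n) hinj).trans
      (LinearEquiv.ofEq _ _ (rangeEq act n)), ?_⟩
    intro x h h'
    rw [LinearEquiv.trans_apply, LinearEquiv.trans_apply,
      LinearEquiv.coe_ofEq_apply, LinearEquiv.coe_ofEq_apply,
      LinearEquiv.ofInjective_apply, LinearEquiv.ofInjective_apply,
      phiPow_tmul, phiPow_tmul, ← mk_jH_mul act h h', ← mul_assoc]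
  · rw [mapGrade_eq, Jv_eq, Jh_eq]
    exact pushH act n
end

section
/- Let H be a k-algebra and W a free H-bimodule with free basis spanning a k-space V, and let A = T_H(W)/(R̃) be a linear-quadratic homogeneous algebra (R̃ ⊆ W ⊕ (W ⊗_H W)) whose degree-2 relations lie in V⊗V ⊆ W⊗_H W. If A_t is a graded deformation of A, then for every c ∈ k the fiber A_t|_{t=c} is isomorphic, as a filtered algebra, to a strong PBW deformation of A of the form T_H(W)/(P) where P = (1−α−β)(R̃₂) ∪ (1−λ)(R̃₁) for some k-linear maps λ: W → H, α: V⊗V → W, β: V⊗V → H, with R̃₁ = R̃∩W and R̃₂ = R̃∩(W⊗_H W). -/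
open scoped TensorProduct

open PaperTH

noncomputable section

variable (k H V : Type*) [CommRing k] [Ring H] [Algebra k H]
  [AddCommGroup V] [Module k V]

/-- The homogeneous linear-quadratic relations `R̃ = R̃₁ ∪ R̃₂`, with `R̃₁ ⊆ W` (degree 1)
and `R̃₂ ⊆ V ⊗ V` (degree 2). -/
noncomputable def lqRels (R1 : Submodule k (TF k H V)) (R2 : Submodule k (V ⊗[k] V)) :
    Set (TF k H V) :=
  (R1 : Set (TF k H V)) ∪ (iVV k H V '' (R2 : Set (V ⊗[k] V)))

/-- The deformed relations `P = (1−α−β)(R̃₂) ∪ (1−λ)(R̃₁)`. -/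
noncomputable def lqDefRels (R1 : Submodule k (TF k H V)) (R2 : Submodule k (V ⊗[k] V))
    (lam : TF k H V →ₗ[k] TF k H V) (α β : V ⊗[k] V →ₗ[k] TF k H V) :
    Set (TF k H V) :=
  {x | ∃ r ∈ R1, x = r - lam r} ∪
  {x | ∃ r ∈ R2, x = iVV k H V r - α r - β r}

/-- The linear-quadratic homogeneous algebra `A = T_H(W)/(R̃)`. -/
abbrev LQAlg (R1 : Submodule k (TF k H V)) (R2 : Submodule k (V ⊗[k] V)) :=
  RingQuot (presRel k H V (lqRels k H V R1 R2))

/-- Degree-`n` component of `A`. -/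
noncomputable def gradeLQ (R1 : Submodule k (TF k H V)) (R2 : Submodule k (V ⊗[k] V))
    (n : ℕ) : Submodule k (LQAlg k H V R1 R2) :=
  Submodule.map
    (RingQuot.mkAlgHom k (presRel k H V (lqRels k H V R1 R2))).toLinearMap
    (gradeF k H V n)

/-- The `n`-th filtered piece of `A`. -/
noncomputable def filtLQ (R1 : Submodule k (TF k H V)) (R2 : Submodule k (V ⊗[k] V))
    (n : ℕ) : Submodule k (LQAlg k H V R1 R2) :=
  Submodule.map
    (RingQuot.mkAlgHom k (presRel k H V (lqRels k H V R1 R2))).toLinearMap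
    (filtF k H V n)

/-- The filtered algebra `B = T_H(W)/(P)`. -/
abbrev LQDefAlg (R1 : Submodule k (TF k H V)) (R2 : Submodule k (V ⊗[k] V))
    (lam : TF k H V →ₗ[k] TF k H V) (α β : V ⊗[k] V →ₗ[k] TF k H V) :=
  RingQuot (presRel k H V (lqDefRels k H V R1 R2 lam α β))

/-- The `n`-th filtered piece of `B`. -/
noncomputable def filtLQDef (R1 : Submodule k (TF k H V)) (R2 : Submodule k (V ⊗[k] V))
    (lam : TF k H V →ₗ[k] TF k H V) (α β : V ⊗[k] V →ₗ[k] TF k H V) (n : ℕ) :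
    Submodule k (LQDefAlg k H V R1 R2 lam α β) :=
  Submodule.map
    (RingQuot.mkAlgHom k (presRel k H V (lqDefRels k H V R1 R2 lam α β))).toLinearMap
    (filtF k H V n)

/-- `B = T_H(W)/(P)` is a strong PBW deformation of `A = T_H(W)/(R̃)`: the canonical
graded epimorphism `A → gr B` is injective in every degree (expressed at the level of
the free presentation). -/
def IsStrongPBWofLQ (R1 : Submodule k (TF k H V)) (R2 : Submodule k (V ⊗[k] V))
    (lam : TF k H V →ₗ[k] TF k H V) (α β : V ⊗[k] V →ₗ[k] TF k H V) : Prop :=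
  ∀ n, gradeF k H V n ⊓
      ((twoSidedSpan k (baseSet k H V)
        ⊔ twoSidedSpan k (lqDefRels k H V R1 R2 lam α β)) ⊔ filtFpred k H V n)
    ≤ twoSidedSpan k (baseSet k H V) ⊔ twoSidedSpan k (lqRels k H V R1 R2)

end

set_option maxHeartbeats 1000000

/-! ### Auxiliary development -/

namespace SP

variable (k H V : Type*) [CommRing k] [Ring H] [Algebra k H]
  [AddCommGroup V] [Module k V]

section Basic

lemma jH_mem_HF (h : H) : jH k H V h ∈ HF k H V :=
  Submodule.mem_sup_left (LinearMap.mem_range_self _ h)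

lemma one_mem_one : (1 : TF k H V) ∈ (1 : Submodule k (TF k H V)) := by
  rw [Submodule.one_eq_range]
  exact ⟨1, by simp [Algebra.linearMap_apply]⟩

lemma one_mem_HF : (1 : TF k H V) ∈ HF k H V :=
  Submodule.mem_sup_right (one_mem_one k H V)

lemma algebraMap_mem_HF (s : k) : algebraMap k (TF k H V) s ∈ HF k H V := by
  rw [Algebra.algebraMap_eq_smul_one]
  exact Submodule.smul_mem _ _ (one_mem_HF k H V)

lemma iota_eq (h : H) (v : V) :
    TensorAlgebra.ι k (h, v) = jH k H V h + jV k H V v := by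
  have : ((h, v) : H × V) = (h, 0) + (0, v) := by simp
  rw [this, map_add]; rfl

lemma mem_HF_iff {x : TF k H V} :
    x ∈ HF k H V ↔ ∃ h s, x = jH k H V h + algebraMap k (TF k H V) s := by
  constructor
  · intro hx
    rcases Submodule.mem_sup.mp hx with ⟨a, ha, b, hb, rfl⟩
    rcases ha with ⟨h, rfl⟩
    rw [Submodule.one_eq_range] at hb
    rcases hb with ⟨s, rfl⟩
    exact ⟨h, s, rfl⟩
  · rintro ⟨h, s, rfl⟩
    exact Submodule.add_mem _ (jH_mem_HF k H V h) (algebraMap_mem_HF k H V s)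

lemma gradeF_zero : gradeF k H V 0 = HF k H V := by
  rw [gradeF, pow_zero, mul_one]

lemma gradeF_succ (n : ℕ) :
    gradeF k H V (n + 1) = gradeF k H V n * (VF k H V * HF k H V) := by
  rw [gradeF, gradeF, pow_succ, mul_assoc]

lemma one_le_HF : (1 : Submodule k (TF k H V)) ≤ HF k H V := le_sup_right

lemma VH_le_grade1 : VF k H V * HF k H V ≤ gradeF k H V 1 := by
  rw [gradeF, pow_one]
  calc VF k H V * HF k H V = 1 * (VF k H V * HF k H V) := (one_mul _).symm
    _ ≤ HF k H V * (VF k H V * HF k H V) :=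
        mul_le_mul_left (one_le_HF k H V) _

lemma VF_le_grade1 : VF k H V ≤ gradeF k H V 1 := by
  refine le_trans ?_ (VH_le_grade1 k H V)
  calc VF k H V = VF k H V * 1 := (mul_one _).symm
    _ ≤ VF k H V * HF k H V := mul_le_mul_right (one_le_HF k H V) _

lemma jV_mem_grade1 (v : V) : jV k H V v ∈ gradeF k H V 1 :=
  VF_le_grade1 k H V (LinearMap.mem_range_self _ v)

lemma gradeF_le_filtF {i n : ℕ} (hin : i ≤ n) : gradeF k H V i ≤ filtF k H V n :=
  le_iSup_of_le i (le_iSup_of_le hin le_rfl)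

lemma gradeF_le_filtFpred {i n : ℕ} (hin : i < n) :
    gradeF k H V i ≤ filtFpred k H V n :=
  le_iSup_of_le i (le_iSup_of_le hin le_rfl)

lemma filtF_mono {m n : ℕ} (hmn : m ≤ n) : filtF k H V m ≤ filtF k H V n := by
  refine iSup₂_le fun i hi => gradeF_le_filtF k H V (le_trans hi hmn)

lemma filtFpred_zero : filtFpred k H V 0 = ⊥ := by
  refine le_bot_iff.mp (iSup₂_le fun i hi => absurd hi (Nat.not_lt_zero i))

lemma filtFpred_succ (n : ℕ) : filtFpred k H V (n + 1) = filtF k H V n := by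
  apply le_antisymm
  · exact iSup₂_le fun i hi => gradeF_le_filtF k H V (Nat.lt_succ_iff.mp hi)
  · exact iSup₂_le fun i hi => gradeF_le_filtFpred k H V (Nat.lt_succ_iff.mpr hi)

lemma filtFpred_le_filtF (n : ℕ) : filtFpred k H V n ≤ filtF k H V n := by
  exact iSup₂_le fun i hi => gradeF_le_filtF k H V (le_of_lt hi)

lemma filtF_eq_pred_sup_grade (n : ℕ) :
    filtF k H V n = filtFpred k H V n ⊔ gradeF k H V n := by
  apply le_antisymm
  · refine iSup₂_le fun i hi => ?_
    rcases lt_or_eq_of_le hi with h | rfl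
    · exact le_sup_of_le_left (gradeF_le_filtFpred k H V h)
    · exact le_sup_right
  · exact sup_le (filtFpred_le_filtF k H V n) (gradeF_le_filtF k H V le_rfl)

lemma filtF_zero : filtF k H V 0 = gradeF k H V 0 := by
  rw [filtF_eq_pred_sup_grade, filtFpred_zero, bot_sup_eq]

end Basic

section TwoSided

lemma mem_twoSidedSpan_of {s : Set (TF k H V)} {p : TF k H V} (hp : p ∈ s)
    (a b : TF k H V) : a * p * b ∈ twoSidedSpan k s :=
  Submodule.subset_span ⟨a, p, b, hp, rfl⟩

lemma self_mem_twoSidedSpan {s : Set (TF k H V)} {p : TF k H V} (hp : p ∈ s) :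
    p ∈ twoSidedSpan k s := by
  simpa using mem_twoSidedSpan_of k H V hp 1 1

lemma twoSidedSpan_mul_left {s : Set (TF k H V)} (a : TF k H V) {x : TF k H V}
    (hx : x ∈ twoSidedSpan k s) : a * x ∈ twoSidedSpan k s := by
  induction hx using Submodule.span_induction with
  | mem x hx =>
      obtain ⟨u, p, w, hp, rfl⟩ := hx
      have : a * (u * p * w) = (a * u) * p * w := by rw [← mul_assoc, ← mul_assoc]
      rw [this]
      exact mem_twoSidedSpan_of k H V hp _ _
  | zero => simpa using Submodule.zero_mem (twoSidedSpan k s)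
  | add x y _ _ hx hy => rw [mul_add]; exact Submodule.add_mem _ hx hy
  | smul c x _ hx => rw [mul_smul_comm]; exact Submodule.smul_mem _ _ hx

lemma twoSidedSpan_mul_right {s : Set (TF k H V)} (b : TF k H V) {x : TF k H V}
    (hx : x ∈ twoSidedSpan k s) : x * b ∈ twoSidedSpan k s := by
  induction hx using Submodule.span_induction with
  | mem x hx =>
      obtain ⟨u, p, w, hp, rfl⟩ := hx
      rw [mul_assoc (u * p) w b]
      exact mem_twoSidedSpan_of k H V hp _ _
  | zero => simpa using Submodule.zero_mem (twoSidedSpan k s)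
  | add x y _ _ hx hy => rw [add_mul]; exact Submodule.add_mem _ hx hy
  | smul c x _ hx => rw [smul_mul_assoc]; exact Submodule.smul_mem _ _ hx

/-- The full relation ideal of the presentation with extra relation set `Q`. -/
noncomputable def IQ (Q : Set (TF k H V)) : Submodule k (TF k H V) :=
  twoSidedSpan k (baseSet k H V) ⊔ twoSidedSpan k Q

lemma IQ_mul_left {Q : Set (TF k H V)} (a : TF k H V) {x : TF k H V}
    (hx : x ∈ IQ k H V Q) : a * x ∈ IQ k H V Q := by
  rcases Submodule.mem_sup.mp hx with ⟨y, hy, z, hz, rfl⟩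
  rw [mul_add]
  exact Submodule.add_mem _
    (Submodule.mem_sup_left (twoSidedSpan_mul_left k H V a hy))
    (Submodule.mem_sup_right (twoSidedSpan_mul_left k H V a hz))

lemma IQ_mul_right {Q : Set (TF k H V)} (b : TF k H V) {x : TF k H V}
    (hx : x ∈ IQ k H V Q) : x * b ∈ IQ k H V Q := by
  rcases Submodule.mem_sup.mp hx with ⟨y, hy, z, hz, rfl⟩
  rw [add_mul]
  exact Submodule.add_mem _
    (Submodule.mem_sup_left (twoSidedSpan_mul_right k H V b hy))
    (Submodule.mem_sup_right (twoSidedSpan_mul_right k H V b hz))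

/-- The ring congruence associated to `IQ Q`. -/
noncomputable def relCon (Q : Set (TF k H V)) : RingCon (TF k H V) where
  r x y := x - y ∈ IQ k H V Q
  iseqv := by
    constructor
    · intro x; simpa using Submodule.zero_mem (IQ k H V Q)
    · intro x y h; simpa using Submodule.neg_mem _ h
    · intro x y z h1 h2; simpa using Submodule.add_mem _ h1 h2
  mul' := by
    intro a b c d h1 h2
    show a * c - b * d ∈ IQ k H V Q
    have e : a * c - b * d = a * (c - d) + (a - b) * d := by
      rw [mul_sub, sub_mul]; abel
    rw [e]
    exact Submodule.add_mem _ (IQ_mul_left k H V a h2) (IQ_mul_right k H V d h1)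
  add' := by
    intro a b c d h1 h2
    show a + c - (b + d) ∈ IQ k H V Q
    have e : a + c - (b + d) = (a - b) + (c - d) := by abel
    rw [e]
    exact Submodule.add_mem _ h1 h2

lemma IQ_le_ker (Q : Set (TF k H V)) :
    IQ k H V Q ≤ LinearMap.ker (RingQuot.mkAlgHom k (presRel k H V Q)).toLinearMap := by
  set f := RingQuot.mkAlgHom k (presRel k H V Q) with hf
  have hgen : ∀ p, p ∈ baseSet k H V ∪ Q → f p = 0 := by
    rintro p (hp | hp)
    · rcases hp with ⟨h, h', rfl⟩ | rfl
      · rw [map_sub, RingQuot.mkAlgHom_rel k (presRel.mulH h h'), sub_self]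
      · rw [map_sub, RingQuot.mkAlgHom_rel k (presRel.oneH), map_one, sub_self]
    · rw [show (0 : RingQuot (presRel k H V Q)) = f 0 from (map_zero f).symm]
      exact RingQuot.mkAlgHom_rel k (presRel.mem hp)
  refine sup_le ?_ ?_ <;>
  · rw [twoSidedSpan, Submodule.span_le]
    rintro x ⟨a, p, b, hp, rfl⟩
    have hp0 : f p = 0 := hgen p
      (by first | exact Set.mem_union_left _ hp | exact Set.mem_union_right _ hp)
    simp only [SetLike.mem_coe, LinearMap.mem_ker, AlgHom.toLinearMap_apply]
    rw [map_mul, map_mul, hp0, mul_zero, zero_mul]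

lemma mkQ_eq_iff (Q : Set (TF k H V)) (x y : TF k H V) :
    RingQuot.mkAlgHom k (presRel k H V Q) x = RingQuot.mkAlgHom k (presRel k H V Q) y
      ↔ x - y ∈ IQ k H V Q := by
  constructor
  · intro hxy
    set c := relCon k H V Q with hcdef
    have hcompat : ∀ ⦃a b : TF k H V⦄, presRel k H V Q a b → c.mk' a = c.mk' b := by
      intro a b hab
      refine (RingCon.eq c).mpr ?_
      show a - b ∈ IQ k H V Q
      cases hab with
      | mulH h h' =>
          have hb : jH k H V h * jH k H V h' - jH k H V (h * h') ∈ baseSet k H V :=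
            Or.inl ⟨h, h', rfl⟩
          exact Submodule.mem_sup_left (self_mem_twoSidedSpan k H V hb)
      | oneH =>
          have hb : jH k H V 1 - 1 ∈ baseSet k H V := Or.inr rfl
          exact Submodule.mem_sup_left (self_mem_twoSidedSpan k H V hb)
      | mem hx =>
          rw [sub_zero]
          exact Submodule.mem_sup_right (self_mem_twoSidedSpan k H V hx)
    have hpt : ∀ z : TF k H V, RingQuot.mkRingHom (presRel k H V Q) z
        = RingQuot.mkAlgHom k (presRel k H V Q) z := by
      intro z
      rw [← RingQuot.mkAlgHom_coe k (presRel k H V Q)]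
      rfl
    have hx' : RingQuot.mkRingHom (presRel k H V Q) x
        = RingQuot.mkRingHom (presRel k H V Q) y := by
      rw [hpt, hpt]; exact hxy
    have hlift := congrArg (RingQuot.lift ⟨(RingCon.mk' c), hcompat⟩) hx'
    rw [RingQuot.lift_mkRingHom_apply, RingQuot.lift_mkRingHom_apply] at hlift
    have : c x y := (RingCon.eq c).mp hlift
    exact this
  · intro hxy
    have := IQ_le_ker k H V Q hxy
    rw [LinearMap.mem_ker, AlgHom.toLinearMap_apply, map_sub, sub_eq_zero] at this
    exact this

lemma mkQ_eq_zero_iff (Q : Set (TF k H V)) (x : TF k H V) :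
    RingQuot.mkAlgHom k (presRel k H V Q) x = 0 ↔ x ∈ IQ k H V Q := by
  rw [show (0 : RingQuot (presRel k H V Q)) = RingQuot.mkAlgHom k (presRel k H V Q) 0
    from (map_zero _).symm]
  rw [mkQ_eq_iff]
  simp

end TwoSided

section Homog

open Polynomial

/-- `C` as a `k`-linear map. -/
noncomputable def Cl : TF k H V →ₗ[k] Polynomial (TF k H V) where
  toFun x := Polynomial.C x
  map_add' x y := by simp
  map_smul' s x := by simp [Polynomial.smul_C]

/-- Coefficient extraction as a `k`-linear map. -/
noncomputable def coeffL (n : ℕ) : Polynomial (TF k H V) →ₗ[k] TF k H V where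
  toFun f := f.coeff n
  map_add' f g := by simp
  map_smul' s f := by simp

@[simp] lemma Cl_apply (x : TF k H V) : Cl k H V x = Polynomial.C x := rfl
@[simp] lemma coeffL_apply (n : ℕ) (f : Polynomial (TF k H V)) :
    coeffL k H V n f = f.coeff n := rfl

/-- The generator map for the homogenization morphism. -/
noncomputable def PhiGen : (H × V) →ₗ[k] Polynomial (TF k H V) where
  toFun p := Polynomial.C (jH k H V p.1) + Polynomial.C (jV k H V p.2) * Polynomial.X
  map_add' p q := by
    simp only [Prod.fst_add, Prod.snd_add, map_add, add_mul]
    abel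
  map_smul' s p := by
    simp only [Prod.smul_fst, Prod.smul_snd, map_smul, RingHom.id_apply, smul_add,
      ← Polynomial.smul_C, smul_mul_assoc]

/-- The homogenization morphism `TF → TF[X]` recording the `V`-degree. -/
noncomputable def Phi : TF k H V →ₐ[k] Polynomial (TF k H V) :=
  TensorAlgebra.lift k (PhiGen k H V)

lemma Phi_iota (h : H) (v : V) :
    Phi k H V (TensorAlgebra.ι k (h, v))
      = Polynomial.C (jH k H V h) + Polynomial.C (jV k H V v) * Polynomial.X :=
  TensorAlgebra.lift_ι_apply _ _

lemma Phi_jH (h : H) : Phi k H V (jH k H V h) = Polynomial.C (jH k H V h) := by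
  have : jH k H V h = TensorAlgebra.ι k ((h, 0) : H × V) := by
    simp [jH, LinearMap.inl_apply]
  conv_lhs => rw [this, Phi_iota]
  simp

lemma Phi_jV (v : V) :
    Phi k H V (jV k H V v) = Polynomial.C (jV k H V v) * Polynomial.X := by
  have : jV k H V v = TensorAlgebra.ι k ((0, v) : H × V) := by
    simp [jV, LinearMap.inr_apply]
  conv_lhs => rw [this, Phi_iota]
  simp

lemma Phi_algebraMap (s : k) :
    Phi k H V (algebraMap k (TF k H V) s)
      = Polynomial.C (algebraMap k (TF k H V) s) := by
  rw [AlgHom.commutes, Polynomial.algebraMap_apply]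

/-- The `V`-degree-`n` "eigenspace" of the homogenization morphism. -/
noncomputable def EigF (n : ℕ) : Submodule k (TF k H V) :=
  LinearMap.ker ((Phi k H V).toLinearMap
    - (LinearMap.mulRight k ((Polynomial.X : Polynomial (TF k H V)) ^ n)).comp (Cl k H V))

lemma mem_EigF_iff {n : ℕ} {x : TF k H V} :
    x ∈ EigF k H V n ↔ Phi k H V x = Polynomial.C x * Polynomial.X ^ n := by
  rw [EigF, LinearMap.mem_ker, LinearMap.sub_apply, sub_eq_zero, AlgHom.toLinearMap_apply,
    LinearMap.comp_apply, LinearMap.mulRight_apply, Cl_apply]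

lemma HF_le_EigF0 : HF k H V ≤ EigF k H V 0 := by
  refine sup_le ?_ ?_
  · rintro x ⟨h, rfl⟩
    rw [mem_EigF_iff, pow_zero, mul_one, Phi_jH]
  · rw [Submodule.one_eq_range]
    rintro x ⟨s, rfl⟩
    rw [mem_EigF_iff, pow_zero, mul_one]
    exact Phi_algebraMap k H V s

lemma VF_le_EigF1 : VF k H V ≤ EigF k H V 1 := by
  rintro x ⟨v, rfl⟩
  rw [mem_EigF_iff, pow_one]
  exact Phi_jV k H V v

lemma EigF_mul_le (m n : ℕ) : EigF k H V m * EigF k H V n ≤ EigF k H V (m + n) := by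
  refine Submodule.mul_le.mpr fun x hx y hy => ?_
  rw [mem_EigF_iff] at hx hy ⊢
  rw [map_mul, hx, hy, mul_assoc, ← mul_assoc (Polynomial.X ^ m),
    Polynomial.X_pow_mul, mul_assoc, ← pow_add, ← mul_assoc, ← map_mul]

lemma gradeF_le_EigF (n : ℕ) : gradeF k H V n ≤ EigF k H V n := by
  have hY : VF k H V * HF k H V ≤ EigF k H V 1 := by
    have h1 : VF k H V * HF k H V ≤ EigF k H V 1 * EigF k H V 0 :=
      mul_le_mul' (VF_le_EigF1 k H V) (HF_le_EigF0 k H V)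
    exact le_trans h1 (EigF_mul_le k H V 1 0)
  have hpow : ∀ m, (VF k H V * HF k H V) ^ m ≤ EigF k H V m := by
    intro m
    induction m with
    | zero =>
        rw [pow_zero]
        rw [Submodule.one_eq_range]
        rintro x ⟨s, rfl⟩
        rw [mem_EigF_iff, pow_zero, mul_one]
        exact Phi_algebraMap k H V s
    | succ m ih =>
        rw [pow_succ]
        exact le_trans (mul_le_mul' ih hY) (EigF_mul_le k H V m 1)
  calc HF k H V * (VF k H V * HF k H V) ^ n
      ≤ EigF k H V 0 * EigF k H V n := mul_le_mul' (HF_le_EigF0 k H V) (hpow n)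
    _ ≤ EigF k H V (0 + n) := EigF_mul_le k H V 0 n
    _ = EigF k H V n := by rw [zero_add]

lemma Phi_grade {n : ℕ} {x : TF k H V} (hx : x ∈ gradeF k H V n) :
    Phi k H V x = Polynomial.C x * Polynomial.X ^ n :=
  (mem_EigF_iff k H V).mp (gradeF_le_EigF k H V n hx)

lemma coeff_Phi_grade_self {n : ℕ} {x : TF k H V} (hx : x ∈ gradeF k H V n) :
    (Phi k H V x).coeff n = x := by
  rw [Phi_grade k H V hx, Polynomial.coeff_mul_X_pow']
  simp

lemma coeff_Phi_grade_ne {n i : ℕ} (hne : i ≠ n) {x : TF k H V}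
    (hx : x ∈ gradeF k H V n) : (Phi k H V x).coeff i = 0 := by
  rw [Phi_grade k H V hx]
  rcases le_or_gt n i with h | h
  · rw [Polynomial.coeff_mul_X_pow', if_pos h, Polynomial.coeff_C,
      if_neg (fun hc => hne (by omega))]
  · rw [Polynomial.coeff_mul_X_pow', if_neg (by omega)]

lemma coeff_Phi_filtFpred {n : ℕ} {x : TF k H V} (hx : x ∈ filtFpred k H V n) :
    (Phi k H V x).coeff n = 0 := by
  have : filtFpred k H V n ≤
      LinearMap.ker ((coeffL k H V n).comp (Phi k H V).toLinearMap) := by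
    refine iSup₂_le fun i hi => fun y hy => ?_
    rw [LinearMap.mem_ker, LinearMap.comp_apply, AlgHom.toLinearMap_apply, coeffL_apply]
    exact coeff_Phi_grade_ne k H V (Nat.ne_of_gt hi) hy
  have := this hx
  rwa [LinearMap.mem_ker, LinearMap.comp_apply, AlgHom.toLinearMap_apply,
    coeffL_apply] at this

lemma iVV_mem_EigF2 (r : V ⊗[k] V) : iVV k H V r ∈ EigF k H V 2 := by
  have : (⊤ : Submodule k (V ⊗[k] V)) ≤
      Submodule.comap (iVV k H V) (EigF k H V 2) := by
    rw [← TensorProduct.span_tmul_eq_top k V V, Submodule.span_le]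
    rintro t ⟨v, w, rfl⟩
    have hv : iVV k H V (v ⊗ₜ[k] w) = jV k H V v * jV k H V w := by
      simp [iVV]
    simp only [Submodule.mem_comap, SetLike.mem_coe, hv]
    have h2 : (2 : ℕ) = 1 + 1 := rfl
    rw [h2]
    exact EigF_mul_le k H V 1 1 (Submodule.mul_mem_mul
      (VF_le_EigF1 k H V (LinearMap.mem_range_self _ v))
      (VF_le_EigF1 k H V (LinearMap.mem_range_self _ w)))
  exact this trivial

/-- Key coefficient-extraction lemma for products around a homogeneous middle factor. -/
lemma coeff_sandwich (F G : Polynomial (TF k H V)) (p : TF k H V) (d n : ℕ)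
    (S : Submodule k (TF k H V)) (hS : ∀ u w : TF k H V, u * p * w ∈ S) :
    (F * (Polynomial.C p * Polynomial.X ^ d) * G).coeff n ∈ S := by
  have hmid : ∀ i, (F * (Polynomial.C p * Polynomial.X ^ d)).coeff i
      = if d ≤ i then F.coeff (i - d) * p else 0 := by
    intro i
    rw [← mul_assoc, Polynomial.coeff_mul_X_pow']
    split_ifs with h
    · rw [Polynomial.coeff_mul_C]
    · rfl
  rw [Polynomial.coeff_mul]
  refine Submodule.sum_mem _ fun ij _ => ?_
  rw [hmid]
  split_ifs with h
  · exact hS _ _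
  · rw [zero_mul]; exact Submodule.zero_mem _

/-- A set is `Φ`-homogeneous if each member is an eigenvector of some degree. -/
def HomogSet (s : Set (TF k H V)) : Prop :=
  ∀ p ∈ s, ∃ d, Phi k H V p = Polynomial.C p * Polynomial.X ^ d

lemma baseSet_homog : HomogSet k H V (baseSet k H V) := by
  rintro p (⟨h, h', rfl⟩ | rfl)
  · refine ⟨0, ?_⟩
    rw [pow_zero, mul_one, map_sub, map_mul, Phi_jH, Phi_jH, ← map_mul, Phi_jH, ← map_sub]
  · refine ⟨0, ?_⟩
    rw [pow_zero, mul_one, map_sub, Phi_jH]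
    rw [show Phi k H V 1 = Polynomial.C 1 from by simp]
    rw [← map_sub]

lemma coeff_Phi_twoSidedSpan {s : Set (TF k H V)} (hs : HomogSet k H V s)
    {z : TF k H V} (hz : z ∈ twoSidedSpan k s) (n : ℕ) :
    (Phi k H V z).coeff n ∈ twoSidedSpan k s := by
  induction hz using Submodule.span_induction with
  | mem x hx =>
      obtain ⟨a, p, b, hp, rfl⟩ := hx
      obtain ⟨d, hd⟩ := hs p hp
      rw [map_mul, map_mul, hd]
      exact coeff_sandwich k H V _ _ p d n _ (fun u w => mem_twoSidedSpan_of k H V hp u w)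
  | zero => simp only [map_zero, Polynomial.coeff_zero]; exact Submodule.zero_mem _
  | add x y _ _ hx hy =>
      rw [map_add, Polynomial.coeff_add]; exact Submodule.add_mem _ hx hy
  | smul c x _ hx =>
      rw [map_smul, Polynomial.coeff_smul]; exact Submodule.smul_mem _ _ hx

lemma coeff_Phi_IQ {Q : Set (TF k H V)} (hQ : HomogSet k H V Q)
    {z : TF k H V} (hz : z ∈ IQ k H V Q) (n : ℕ) :
    (Phi k H V z).coeff n ∈ IQ k H V Q := by
  rcases Submodule.mem_sup.mp hz with ⟨x, hx, y, hy, rfl⟩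
  rw [map_add, Polynomial.coeff_add]
  exact Submodule.add_mem _
    (Submodule.mem_sup_left (coeff_Phi_twoSidedSpan k H V (baseSet_homog k H V) hx n))
    (Submodule.mem_sup_right (coeff_Phi_twoSidedSpan k H V hQ hy n))

end Homog

section MulStruct

lemma mul_tss_le (M : Submodule k (TF k H V)) (s : Set (TF k H V)) :
    M * twoSidedSpan k s ≤ twoSidedSpan k s :=
  Submodule.mul_le.mpr fun x _ y hy => twoSidedSpan_mul_left k H V x hy

lemma tss_mul_le (M : Submodule k (TF k H V)) (s : Set (TF k H V)) :
    twoSidedSpan k s * M ≤ twoSidedSpan k s :=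
  Submodule.mul_le.mpr fun x hx y _ => twoSidedSpan_mul_right k H V y hx

lemma sup_mul_sup_le (M N : Submodule k (TF k H V)) (s : Set (TF k H V)) :
    (M ⊔ twoSidedSpan k s) * (N ⊔ twoSidedSpan k s)
      ≤ M * N ⊔ twoSidedSpan k s := by
  rw [Submodule.mul_sup, Submodule.sup_mul, Submodule.sup_mul]
  refine sup_le (sup_le ?_ ?_) (sup_le ?_ ?_)
  · exact le_sup_left
  · exact le_sup_of_le_right (tss_mul_le k H V N s)
  · exact le_sup_of_le_right (mul_tss_le k H V M s)
  · exact le_sup_of_le_right (tss_mul_le k H V _ s)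

lemma HF_mul_HF : HF k H V * HF k H V
    ≤ HF k H V ⊔ twoSidedSpan k (baseSet k H V) := by
  refine Submodule.mul_le.mpr fun x hx y hy => ?_
  obtain ⟨h, s, rfl⟩ := (mem_HF_iff k H V).mp hx
  obtain ⟨h', s', rfl⟩ := (mem_HF_iff k H V).mp hy
  rw [add_mul, mul_add, mul_add]
  have e1 : jH k H V h * jH k H V h'
      = jH k H V (h * h') + (jH k H V h * jH k H V h' - jH k H V (h * h')) := by abel
  have m1 : jH k H V h * jH k H V h'
      ∈ HF k H V ⊔ twoSidedSpan k (baseSet k H V) := by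
    rw [e1]
    exact Submodule.add_mem _ (Submodule.mem_sup_left (jH_mem_HF k H V _))
      (Submodule.mem_sup_right (self_mem_twoSidedSpan k H V (Or.inl ⟨h, h', rfl⟩)))
  have m2 : jH k H V h * algebraMap k (TF k H V) s'
      ∈ HF k H V ⊔ twoSidedSpan k (baseSet k H V) := by
    rw [← Algebra.commutes s' (jH k H V h), ← Algebra.smul_def]
    exact Submodule.mem_sup_left (Submodule.smul_mem _ _ (jH_mem_HF k H V h))
  have m3 : algebraMap k (TF k H V) s * jH k H V h'
      ∈ HF k H V ⊔ twoSidedSpan k (baseSet k H V) := by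
    rw [← Algebra.smul_def]
    exact Submodule.mem_sup_left (Submodule.smul_mem _ _ (jH_mem_HF k H V h'))
  have m4 : algebraMap k (TF k H V) s * algebraMap k (TF k H V) s'
      ∈ HF k H V ⊔ twoSidedSpan k (baseSet k H V) := by
    rw [← map_mul]
    exact Submodule.mem_sup_left (algebraMap_mem_HF k H V _)
  exact Submodule.add_mem _ (Submodule.add_mem _ m1 m2) (Submodule.add_mem _ m3 m4)

lemma gradeF_mul_HF (p : ℕ) : gradeF k H V p * HF k H V
    ≤ gradeF k H V p ⊔ twoSidedSpan k (baseSet k H V) := by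
  induction p with
  | zero =>
      rw [gradeF_zero]
      exact HF_mul_HF k H V
  | succ p ih =>
      rw [gradeF_succ]
      have e : gradeF k H V p * (VF k H V * HF k H V) * HF k H V
          = gradeF k H V p * (VF k H V * (HF k H V * HF k H V)) := by
        rw [mul_assoc, mul_assoc]
      rw [e]
      have h1 : VF k H V * (HF k H V * HF k H V)
          ≤ VF k H V * HF k H V ⊔ twoSidedSpan k (baseSet k H V) := by
        refine le_trans (mul_le_mul_right (HF_mul_HF k H V) _) ?_
        rw [Submodule.mul_sup]
        exact sup_le le_sup_left (le_sup_of_le_right (mul_tss_le k H V _ _))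
      refine le_trans (mul_le_mul_right h1 _) ?_
      rw [Submodule.mul_sup, ← gradeF_succ]
      exact sup_le le_sup_left (le_sup_of_le_right (mul_tss_le k H V _ _))

lemma grade_mul_grade (p q : ℕ) : gradeF k H V p * gradeF k H V q
    ≤ gradeF k H V (p + q) ⊔ twoSidedSpan k (baseSet k H V) := by
  induction q with
  | zero =>
      rw [gradeF_zero]
      exact gradeF_mul_HF k H V p
  | succ q ih =>
      rw [gradeF_succ, ← mul_assoc]
      calc gradeF k H V p * gradeF k H V q * (VF k H V * HF k H V)
          ≤ (gradeF k H V (p + q) ⊔ twoSidedSpan k (baseSet k H V))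
              * (VF k H V * HF k H V) := mul_le_mul_left ih _
        _ ≤ gradeF k H V (p + q + 1) ⊔ twoSidedSpan k (baseSet k H V) := by
            rw [Submodule.sup_mul, gradeF_succ]
            exact sup_le le_sup_left (le_sup_of_le_right (tss_mul_le k H V _ _))

lemma filt_mul_filt (p q : ℕ) : filtF k H V p * filtF k H V q
    ≤ filtF k H V (p + q) ⊔ twoSidedSpan k (baseSet k H V) := by
  rw [filtF, filtF, Submodule.iSup_mul]
  refine iSup_le fun i => ?_
  rw [Submodule.iSup_mul]
  refine iSup_le fun hi => ?_
  rw [Submodule.mul_iSup]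
  refine iSup_le fun j => ?_
  rw [Submodule.mul_iSup]
  refine iSup_le fun hj => ?_
  refine le_trans (grade_mul_grade k H V i j) (sup_le_sup_right ?_ _)
  exact gradeF_le_filtF k H V (Nat.add_le_add hi hj)

end MulStruct

section QuotGeneric

variable (Q : Set (TF k H V))

/-- Image of the filtration in the quotient by `presRel Q`. -/
noncomputable def mapF (n : ℕ) : Submodule k (RingQuot (presRel k H V Q)) :=
  Submodule.map (RingQuot.mkAlgHom k (presRel k H V Q)).toLinearMap (filtF k H V n)

noncomputable def mapG (n : ℕ) : Submodule k (RingQuot (presRel k H V Q)) :=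
  Submodule.map (RingQuot.mkAlgHom k (presRel k H V Q)).toLinearMap (gradeF k H V n)

noncomputable def mapP (n : ℕ) : Submodule k (RingQuot (presRel k H V Q)) :=
  Submodule.map (RingQuot.mkAlgHom k (presRel k H V Q)).toLinearMap (filtFpred k H V n)

lemma map_tssBase_eq_bot :
    Submodule.map (RingQuot.mkAlgHom k (presRel k H V Q)).toLinearMap
      (twoSidedSpan k (baseSet k H V)) = ⊥ := by
  rw [← le_bot_iff, Submodule.map_le_iff_le_comap]
  intro x hx
  have : x ∈ IQ k H V Q := Submodule.mem_sup_left hx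
  have := IQ_le_ker k H V Q this
  simpa using this

lemma mapF_mono {m n : ℕ} (h : m ≤ n) : mapF k H V Q m ≤ mapF k H V Q n :=
  Submodule.map_mono (filtF_mono k H V h)

lemma mapG_le_mapF {i n : ℕ} (h : i ≤ n) : mapG k H V Q i ≤ mapF k H V Q n :=
  Submodule.map_mono (gradeF_le_filtF k H V h)

lemma mapP_succ (n : ℕ) : mapP k H V Q (n + 1) = mapF k H V Q n := by
  rw [mapP, mapF, filtFpred_succ]

lemma mapP_zero : mapP k H V Q 0 = ⊥ := by
  rw [mapP, filtFpred_zero, Submodule.map_bot]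

lemma mapP_eq_iSup (n : ℕ) : mapP k H V Q n = ⨆ i < n, mapG k H V Q i := by
  rw [mapP, filtFpred, Submodule.map_iSup]
  refine iSup_congr fun i => ?_
  rw [Submodule.map_iSup]
  rfl

lemma mapF_eq_iSup (n : ℕ) : mapF k H V Q n = ⨆ i ≤ n, mapG k H V Q i := by
  rw [mapF, filtF, Submodule.map_iSup]
  refine iSup_congr fun i => ?_
  rw [Submodule.map_iSup]
  rfl

lemma mapF_eq_sup (n : ℕ) : mapF k H V Q n = mapP k H V Q n ⊔ mapG k H V Q n := by
  rw [mapF, mapP, mapG, filtF_eq_pred_sup_grade, Submodule.map_sup]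

lemma mapF_mul (p q : ℕ) :
    mapF k H V Q p * mapF k H V Q q ≤ mapF k H V Q (p + q) := by
  rw [mapF, mapF, mapF, ← Submodule.map_mul]
  refine le_trans (Submodule.map_mono (filt_mul_filt k H V p q)) ?_
  rw [Submodule.map_sup, map_tssBase_eq_bot, sup_bot_eq]

lemma mem_iSup_mapF (x : TF k H V) :
    RingQuot.mkAlgHom k (presRel k H V Q) x ∈ ⨆ n, mapF k H V Q n := by
  have hdir : Directed (· ≤ ·) (mapF k H V Q) :=
    Monotone.directed_le fun a b hab => mapF_mono k H V Q hab
  have hmem : ∀ n (y : RingQuot (presRel k H V Q)), y ∈ mapF k H V Q n →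
      y ∈ ⨆ n, mapF k H V Q n := fun n y hy =>
    (Submodule.mem_iSup_of_directed _ hdir).mpr ⟨n, hy⟩
  induction x using TensorAlgebra.induction with
  | algebraMap r =>
      refine hmem 0 _ (Submodule.mem_map_of_mem ?_)
      rw [filtF_zero, gradeF_zero]
      exact algebraMap_mem_HF k H V r
  | ι x =>
      refine hmem 1 _ (Submodule.mem_map_of_mem ?_)
      obtain ⟨h, v⟩ := x
      rw [iota_eq]
      refine Submodule.add_mem _ ?_ ?_
      · exact gradeF_le_filtF k H V (Nat.zero_le 1)
          (by rw [gradeF_zero]; exact jH_mem_HF k H V h)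
      · exact gradeF_le_filtF k H V le_rfl (jV_mem_grade1 k H V v)
  | mul a b ha hb =>
      obtain ⟨m, hm⟩ := (Submodule.mem_iSup_of_directed _ hdir).mp ha
      obtain ⟨n, hn⟩ := (Submodule.mem_iSup_of_directed _ hdir).mp hb
      rw [map_mul]
      exact hmem (m + n) _ (mapF_mul k H V Q m n (Submodule.mul_mem_mul hm hn))
  | add a b ha hb =>
      rw [map_add]
      exact Submodule.add_mem _ ha hb

lemma iSup_mapF_eq_top : (⨆ n, mapF k H V Q n) = ⊤ := by
  rw [eq_top_iff]
  rintro z -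
  obtain ⟨x, rfl⟩ := RingQuot.mkAlgHom_surjective k (presRel k H V Q) z
  exact mem_iSup_mapF k H V Q x

lemma exists_mem_mapF (z : RingQuot (presRel k H V Q)) : ∃ n, z ∈ mapF k H V Q n := by
  have hdir : Directed (· ≤ ·) (mapF k H V Q) :=
    Monotone.directed_le fun a b hab => mapF_mono k H V Q hab
  have : z ∈ ⨆ n, mapF k H V Q n := by rw [iSup_mapF_eq_top]; trivial
  exact (Submodule.mem_iSup_of_directed _ hdir).mp this

/-- Lemma M: coefficients of the homogenization land in the filtration mod base ideal. -/
lemma coeff_Phi_mem_filt (a : TF k H V) (i : ℕ) :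
    (Phi k H V a).coeff i ∈ filtF k H V i ⊔ twoSidedSpan k (baseSet k H V) := by
  induction a using TensorAlgebra.induction generalizing i with
  | algebraMap r =>
      rw [Phi_algebraMap, Polynomial.coeff_C]
      split_ifs with h
      · subst h
        refine Submodule.mem_sup_left (gradeF_le_filtF k H V le_rfl ?_)
        rw [gradeF_zero]; exact algebraMap_mem_HF k H V r
      · exact Submodule.zero_mem _
  | ι x =>
      obtain ⟨h, v⟩ := x
      rw [Phi_iota]
      rw [Polynomial.coeff_add, Polynomial.coeff_C]
      have : (Polynomial.C (jV k H V v) * Polynomial.X).coeff i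
          = if i = 1 then jV k H V v else 0 := by
        rw [Polynomial.coeff_C_mul, Polynomial.coeff_X]
        split_ifs with h1 h2 h3
        · rw [mul_one]
        · omega
        · omega
        · rw [mul_zero]
      rw [this]
      split_ifs with h1 h2 h3
      · omega
      · subst h1
        rw [add_zero]
        refine Submodule.mem_sup_left (gradeF_le_filtF k H V le_rfl ?_)
        rw [gradeF_zero]; exact jH_mem_HF k H V h
      · subst h3
        rw [zero_add]
        exact Submodule.mem_sup_left
          (gradeF_le_filtF k H V le_rfl (jV_mem_grade1 k H V v))
      · rw [add_zero]; exact Submodule.zero_mem _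
  | mul a b ha hb =>
      rw [map_mul, Polynomial.coeff_mul]
      refine Submodule.sum_mem _ fun ij hij => ?_
      have hij' : ij.1 + ij.2 = i := Finset.HasAntidiagonal.mem_antidiagonal.mp hij
      have : (Phi k H V a).coeff ij.1 * (Phi k H V b).coeff ij.2
          ∈ (filtF k H V ij.1 ⊔ twoSidedSpan k (baseSet k H V))
            * (filtF k H V ij.2 ⊔ twoSidedSpan k (baseSet k H V)) :=
        Submodule.mul_mem_mul (ha ij.1) (hb ij.2)
      refine (le_trans (sup_mul_sup_le k H V _ _ _) ?_) this
      refine sup_le ?_ le_sup_right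
      refine le_trans (filt_mul_filt k H V ij.1 ij.2) (sup_le_sup_right ?_ _)
      rw [hij']
  | add a b ha hb =>
      rw [map_add, Polynomial.coeff_add]
      exact Submodule.add_mem _ (ha i) (hb i)

lemma one_mem_mapF0 : (1 : RingQuot (presRel k H V Q)) ∈ mapF k H V Q 0 := by
  rw [show (1 : RingQuot (presRel k H V Q))
      = RingQuot.mkAlgHom k (presRel k H V Q) 1 from (map_one _).symm]
  refine Submodule.mem_map_of_mem ?_
  rw [filtF_zero, gradeF_zero]
  exact one_mem_HF k H V

lemma mapF_le_mapP {m n : ℕ} (h : m < n) : mapF k H V Q m ≤ mapP k H V Q n := by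
  rw [mapF_eq_iSup, mapP_eq_iSup]
  exact iSup₂_le fun i hi => le_iSup₂_of_le i (lt_of_le_of_lt hi h) le_rfl

lemma mapP_mono {m n : ℕ} (h : m ≤ n) : mapP k H V Q m ≤ mapP k H V Q n := by
  rw [mapP_eq_iSup, mapP_eq_iSup]
  exact iSup₂_le fun i hi => le_iSup₂_of_le i (lt_of_lt_of_le hi h) le_rfl

lemma mapP_le_mapF {n : ℕ} : mapP k H V Q n ≤ mapF k H V Q n :=
  Submodule.map_mono (filtFpred_le_filtF k H V n)

lemma mapP_mul_mapF (p q : ℕ) :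
    mapP k H V Q p * mapF k H V Q q ≤ mapP k H V Q (p + q) := by
  rw [mapP_eq_iSup, Submodule.iSup_mul]
  refine iSup_le fun i => ?_
  rw [Submodule.iSup_mul]
  refine iSup_le fun hi => ?_
  refine le_trans (mul_le_mul_left (mapG_le_mapF k H V Q le_rfl) _) ?_
  exact le_trans (mapF_mul k H V Q i q) (mapF_le_mapP k H V Q (by omega))

lemma mapF_mul_mapP (p q : ℕ) :
    mapF k H V Q p * mapP k H V Q q ≤ mapP k H V Q (p + q) := by
  rw [mapP_eq_iSup, Submodule.mul_iSup]
  refine iSup_le fun i => ?_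
  rw [Submodule.mul_iSup]
  refine iSup_le fun hi => ?_
  refine le_trans (mul_le_mul_right (mapG_le_mapF k H V Q le_rfl) _) ?_
  exact le_trans (mapF_mul k H V Q p i) (mapF_le_mapP k H V Q (by omega))


/-- `mkQ` of any homogenization coefficient lands in the corresponding filtration level. -/
lemma mkQ_coeff_Phi_mem (a : TF k H V) (m : ℕ) :
    RingQuot.mkAlgHom k (presRel k H V Q) ((Phi k H V a).coeff m) ∈ mapF k H V Q m := by
  have h := coeff_Phi_mem_filt k H V a m
  obtain ⟨u, hu, w, hw, e⟩ := Submodule.mem_sup.mp h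
  have hw0 : RingQuot.mkAlgHom k (presRel k H V Q) w = 0 := by
    have : w ∈ IQ k H V Q := Submodule.mem_sup_left hw
    have := IQ_le_ker k H V Q this
    simpa using this
  rw [← e, map_add, hw0, add_zero]
  exact Submodule.mem_map_of_mem hu

/-- Key lemma for degree drop: coefficient of a sandwich product, after substituting the
middle relation by a lower-degree element in the quotient. -/
lemma coeff_three_mem (a b p low : TF k H V) (d : ℕ) (hd : 1 ≤ d)
    (hlow : low ∈ filtF k H V (d - 1))
    (hrel : RingQuot.mkAlgHom k (presRel k H V Q) p
      = RingQuot.mkAlgHom k (presRel k H V Q) low) (n : ℕ) :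
    RingQuot.mkAlgHom k (presRel k H V Q)
        ((Phi k H V a * (Polynomial.C p * Polynomial.X ^ d) * Phi k H V b).coeff n)
      ∈ mapP k H V Q n := by
  set f := RingQuot.mkAlgHom k (presRel k H V Q) with hf
  have hmid : ∀ i, (Phi k H V a * (Polynomial.C p * Polynomial.X ^ d)).coeff i
      = if d ≤ i then (Phi k H V a).coeff (i - d) * p else 0 := by
    intro i
    rw [← mul_assoc, Polynomial.coeff_mul_X_pow']
    split_ifs with h
    · rw [Polynomial.coeff_mul_C]
    · rfl
  rw [Polynomial.coeff_mul, map_sum]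
  refine Submodule.sum_mem _ fun ij hij => ?_
  have hij' : ij.1 + ij.2 = n := Finset.HasAntidiagonal.mem_antidiagonal.mp hij
  rw [hmid]
  split_ifs with h
  · rw [map_mul, map_mul, hrel]
    have m1 : f ((Phi k H V a).coeff (ij.1 - d)) ∈ mapF k H V Q (ij.1 - d) :=
      mkQ_coeff_Phi_mem k H V Q a _
    have m2 : f low ∈ mapF k H V Q (d - 1) := Submodule.mem_map_of_mem hlow
    have m3 : f ((Phi k H V b).coeff ij.2) ∈ mapF k H V Q ij.2 :=
      mkQ_coeff_Phi_mem k H V Q b _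
    have : f ((Phi k H V a).coeff (ij.1 - d)) * f low * f ((Phi k H V b).coeff ij.2)
        ∈ mapF k H V Q (ij.1 - d + (d - 1) + ij.2) := by
      refine mapF_mul k H V Q _ _ (Submodule.mul_mem_mul ?_ m3)
      exact mapF_mul k H V Q _ _ (Submodule.mul_mem_mul m1 m2)
    refine mapF_le_mapP k H V Q ?_ this
    omega
  · rw [zero_mul, map_zero]
    exact Submodule.zero_mem _


end QuotGeneric

section SumSwap

variable {M : Type*} [AddCommMonoid M]

lemma sum_square_eq_sum_antidiag {N : ℕ} {f : ℕ → ℕ → M}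
    (hf : ∀ i j, N < i + j → f i j = 0) :
    ∑ i ∈ Finset.range (N + 1), ∑ j ∈ Finset.range (N + 1), f i j
      = ∑ n ∈ Finset.range (N + 1), ∑ i ∈ Finset.range (n + 1), f i (n - i) := by
  classical
  have hrhs : ∀ n, ∑ i ∈ Finset.range (n + 1), f i (n - i)
      = ∑ ij ∈ Finset.HasAntidiagonal.antidiagonal n, f ij.1 ij.2 := fun n =>
    (Finset.Nat.sum_antidiagonal_eq_sum_range_succ_mk (fun ij => f ij.1 ij.2) n).symm
  simp only [hrhs]
  rw [← Finset.sum_biUnion (by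
    intro m _ n _ hmn
    simp only [Finset.disjoint_left]
    intro ij h1 h2
    rw [Finset.HasAntidiagonal.mem_antidiagonal] at h1 h2
    exact hmn (h1 ▸ h2))]
  rw [← Finset.sum_product']
  refine (Finset.sum_subset ?_ ?_).symm
  · intro ij hij
    rw [Finset.mem_biUnion] at hij
    obtain ⟨n, hn, hijn⟩ := hij
    rw [Finset.HasAntidiagonal.mem_antidiagonal] at hijn
    rw [Finset.mem_range] at hn
    rw [Finset.mem_product, Finset.mem_range, Finset.mem_range]
    omega
  · intro ij _ hij
    refine hf ij.1 ij.2 ?_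
    by_contra hc
    push_neg at hc
    exact hij (Finset.mem_biUnion.mpr ⟨ij.1 + ij.2,
      Finset.mem_range.mpr (by omega), Finset.HasAntidiagonal.mem_antidiagonal.mpr rfl⟩)

end SumSwap

section Fiber

variable (R1 : Submodule k (TF k H V)) (R2 : Submodule k (V ⊗[k] V))

/-- A graded deformation of `A = LQAlg k H V R1 R2`, packaged. -/
structure Defm where
  mu : ℕ → LQAlg k H V R1 R2 →ₗ[k] LQAlg k H V R1 R2 →ₗ[k] LQAlg k H V R1 R2
  c : k
  hmu0 : ∀ a b, mu 0 a b = a * b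
  hunital : ∀ i, 1 ≤ i → ∀ a, mu i 1 a = 0 ∧ mu i a 1 = 0
  hdeg : ∀ (i m n : ℕ) (a b), a ∈ gradeLQ k H V R1 R2 m → b ∈ gradeLQ k H V R1 R2 n →
      (i ≤ m + n → mu i a b ∈ gradeLQ k H V R1 R2 (m + n - i)) ∧
      (m + n < i → mu i a b = 0)
  hassoc : ∀ (n : ℕ) (a b c), ∑ i ∈ Finset.range (n + 1), mu i (mu (n - i) a b) c
        = ∑ i ∈ Finset.range (n + 1), mu i a (mu (n - i) b c)

variable {k H V R1 R2}

/-- relation set of `A`. -/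
noncomputable abbrev lqS := lqRels k H V R1 R2

lemma mapG_lq (n : ℕ) : mapG k H V (lqRels k H V R1 R2) n = gradeLQ k H V R1 R2 n := rfl
lemma mapF_lq (n : ℕ) : mapF k H V (lqRels k H V R1 R2) n = filtLQ k H V R1 R2 n := rfl

lemma filtLQ_induction {P : LQAlg k H V R1 R2 → Prop} {p : ℕ}
    (h0 : P 0) (hadd : ∀ x y, P x → P y → P (x + y))
    (hg : ∀ j, j ≤ p → ∀ x ∈ gradeLQ k H V R1 R2 j, P x) :
    ∀ a ∈ mapF k H V (lqRels k H V R1 R2) p, P a := by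
  intro a ha
  rw [mapF_eq_iSup] at ha
  refine Submodule.iSup_induction (motive := P) _ ha ?_ h0 hadd
  intro i x hx
  by_cases hip : i ≤ p
  · rw [iSup_pos hip] at hx
    exact hg i hip x hx
  · rw [iSup_neg hip] at hx
    rw [(Submodule.mem_bot _).mp hx]
    exact h0

variable (D : Defm k H V R1 R2)

lemma mu_bound {p q : ℕ} {a b : LQAlg k H V R1 R2}
    (ha : a ∈ mapF k H V (lqRels k H V R1 R2) p)
    (hb : b ∈ mapF k H V (lqRels k H V R1 R2) q) (i : ℕ) :
    D.mu i a b ∈ mapF k H V (lqRels k H V R1 R2) (p + q - i)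
      ∧ (p + q < i → D.mu i a b = 0) := by
  set F := mapF k H V (lqRels k H V R1 R2) with hF
  -- step 1 : both graded
  have step1 : ∀ j, j ≤ p → ∀ x ∈ gradeLQ k H V R1 R2 j,
      ∀ l, l ≤ q → ∀ y ∈ gradeLQ k H V R1 R2 l, ∀ i,
      D.mu i x y ∈ F (p + q - i) ∧ (p + q < i → D.mu i x y = 0) := by
    intro j hj x hx l hl y hy i
    have hd := D.hdeg i j l x y hx hy
    constructor
    · rcases le_or_gt i (j + l) with h | h
      · have := hd.1 h
        rw [← mapG_lq] at this
        exact mapG_le_mapF k H V _ (by omega) this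
      · rw [hd.2 h]
        exact Submodule.zero_mem _
    · intro hi
      exact hd.2 (by omega)
  -- step 2 : a graded, b filtered
  have step2 : ∀ j, j ≤ p → ∀ x ∈ gradeLQ k H V R1 R2 j, ∀ i,
      D.mu i x b ∈ F (p + q - i) ∧ (p + q < i → D.mu i x b = 0) := by
    intro j hj x hx
    refine filtLQ_induction (P := fun y => ∀ i, D.mu i x y ∈ F (p + q - i)
      ∧ (p + q < i → D.mu i x y = 0)) ?_ ?_ ?_ b hb
    · intro i
      simp only [map_zero]
      exact ⟨Submodule.zero_mem _, fun _ => trivial⟩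
    · intro y y' hy hy' i
      rw [map_add]
      exact ⟨Submodule.add_mem _ (hy i).1 (hy' i).1,
        fun h => by rw [(hy i).2 h, (hy' i).2 h, add_zero]⟩
    · intro l hl y hy i
      exact step1 j hj x hx l hl y hy i
  -- step 3 : both filtered
  have step3 : ∀ i, D.mu i a b ∈ F (p + q - i) ∧ (p + q < i → D.mu i a b = 0) := by
    refine filtLQ_induction (P := fun x => ∀ i, D.mu i x b ∈ F (p + q - i)
      ∧ (p + q < i → D.mu i x b = 0)) ?_ ?_ ?_ a ha
    · intro i
      simp only [map_zero, LinearMap.zero_apply]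
      exact ⟨Submodule.zero_mem _, fun _ => trivial⟩
    · intro y y' hy hy' i
      rw [map_add, LinearMap.add_apply]
      exact ⟨Submodule.add_mem _ (hy i).1 (hy' i).1,
        fun h => by rw [(hy i).2 h, (hy' i).2 h, add_zero]⟩
    · intro j hj x hx i
      exact step2 j hj x hx i
  exact step3 i

lemma mu_mem {p q : ℕ} {a b : LQAlg k H V R1 R2}
    (ha : a ∈ mapF k H V (lqRels k H V R1 R2) p)
    (hb : b ∈ mapF k H V (lqRels k H V R1 R2) q) (i : ℕ) :
    D.mu i a b ∈ mapF k H V (lqRels k H V R1 R2) (p + q) :=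
  mapF_mono k H V _ (Nat.sub_le _ _) (mu_bound D ha hb i).1

lemma mu_zero {p q : ℕ} {a b : LQAlg k H V R1 R2}
    (ha : a ∈ mapF k H V (lqRels k H V R1 R2) p)
    (hb : b ∈ mapF k H V (lqRels k H V R1 R2) q) {i : ℕ} (hi : p + q < i) :
    D.mu i a b = 0 :=
  (mu_bound D ha hb i).2 hi

lemma mu_low {p q : ℕ} {a b : LQAlg k H V R1 R2}
    (ha : a ∈ mapF k H V (lqRels k H V R1 R2) p)
    (hb : b ∈ mapF k H V (lqRels k H V R1 R2) q) {i : ℕ} (hi : 1 ≤ i) :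
    D.mu i a b ∈ mapP k H V (lqRels k H V R1 R2) (p + q) := by
  rcases le_or_gt i (p + q) with h | h
  · refine mapF_le_mapP k H V _ (show p + q - i < p + q by omega) (mu_bound D ha hb i).1
  · rw [mu_zero D ha hb h]
    exact Submodule.zero_mem _

/-- The fiber multiplication `m_c`. -/
noncomputable def mc (a b : LQAlg k H V R1 R2) : LQAlg k H V R1 R2 :=
  ∑ᶠ i, D.c ^ i • D.mu i a b

lemma mc_eq_sum {p q N : ℕ} {a b : LQAlg k H V R1 R2}
    (ha : a ∈ mapF k H V (lqRels k H V R1 R2) p)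
    (hb : b ∈ mapF k H V (lqRels k H V R1 R2) q) (hN : p + q ≤ N) :
    mc D a b = ∑ i ∈ Finset.range (N + 1), D.c ^ i • D.mu i a b := by
  apply finsum_eq_finset_sum_of_support_subset
  intro i hi
  simp only [Function.mem_support] at hi
  rw [Finset.coe_range, Set.mem_Iio]
  by_contra hc
  push_neg at hc
  exact hi (by rw [mu_zero D ha hb (by omega), smul_zero])

lemma mc_mem {p q : ℕ} {a b : LQAlg k H V R1 R2}
    (ha : a ∈ mapF k H V (lqRels k H V R1 R2) p)
    (hb : b ∈ mapF k H V (lqRels k H V R1 R2) q) :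
    mc D a b ∈ mapF k H V (lqRels k H V R1 R2) (p + q) := by
  rw [mc_eq_sum D ha hb le_rfl]
  exact Submodule.sum_mem _ fun i _ => Submodule.smul_mem _ _ (mu_mem D ha hb i)

lemma exists_filt (a : LQAlg k H V R1 R2) :
    ∃ n, a ∈ mapF k H V (lqRels k H V R1 R2) n :=
  exists_mem_mapF k H V _ a

lemma mc_sub_mul {p q : ℕ} {a b : LQAlg k H V R1 R2}
    (ha : a ∈ mapF k H V (lqRels k H V R1 R2) p)
    (hb : b ∈ mapF k H V (lqRels k H V R1 R2) q) :
    mc D a b - a * b ∈ mapP k H V (lqRels k H V R1 R2) (p + q) := by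
  rw [mc_eq_sum D ha hb le_rfl, Finset.sum_range_succ']
  rw [pow_zero, one_smul, D.hmu0, add_sub_cancel_right]
  refine Submodule.sum_mem _ fun i _ => Submodule.smul_mem _ _ ?_
  exact mu_low D ha hb (by omega)

lemma mc_add_left (a a' b : LQAlg k H V R1 R2) :
    mc D (a + a') b = mc D a b + mc D a' b := by
  obtain ⟨p, hp⟩ := exists_filt a
  obtain ⟨p', hp'⟩ := exists_filt a'
  obtain ⟨q, hq⟩ := exists_filt b
  have ha : a ∈ mapF k H V (lqRels k H V R1 R2) (max p p') :=
    mapF_mono k H V _ (le_max_left _ _) hp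
  have ha' : a' ∈ mapF k H V (lqRels k H V R1 R2) (max p p') :=
    mapF_mono k H V _ (le_max_right _ _) hp'
  have haa : a + a' ∈ mapF k H V (lqRels k H V R1 R2) (max p p') :=
    Submodule.add_mem _ ha ha'
  rw [mc_eq_sum D haa hq le_rfl, mc_eq_sum D ha hq le_rfl, mc_eq_sum D ha' hq le_rfl,
    ← Finset.sum_add_distrib]
  refine Finset.sum_congr rfl fun i _ => ?_
  rw [map_add, LinearMap.add_apply, smul_add]

lemma mc_add_right (a b b' : LQAlg k H V R1 R2) :
    mc D a (b + b') = mc D a b + mc D a b' := by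
  obtain ⟨p, hp⟩ := exists_filt a
  obtain ⟨q, hq⟩ := exists_filt b
  obtain ⟨q', hq'⟩ := exists_filt b'
  have hb : b ∈ mapF k H V (lqRels k H V R1 R2) (max q q') :=
    mapF_mono k H V _ (le_max_left _ _) hq
  have hb' : b' ∈ mapF k H V (lqRels k H V R1 R2) (max q q') :=
    mapF_mono k H V _ (le_max_right _ _) hq'
  have hbb : b + b' ∈ mapF k H V (lqRels k H V R1 R2) (max q q') :=
    Submodule.add_mem _ hb hb'
  rw [mc_eq_sum D hp hbb le_rfl, mc_eq_sum D hp hb le_rfl, mc_eq_sum D hp hb' le_rfl,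
    ← Finset.sum_add_distrib]
  refine Finset.sum_congr rfl fun i _ => ?_
  rw [map_add, smul_add]

lemma mc_smul_left (s : k) (a b : LQAlg k H V R1 R2) :
    mc D (s • a) b = s • mc D a b := by
  obtain ⟨p, hp⟩ := exists_filt a
  obtain ⟨q, hq⟩ := exists_filt b
  have hsa : s • a ∈ mapF k H V (lqRels k H V R1 R2) p := Submodule.smul_mem _ _ hp
  rw [mc_eq_sum D hsa hq le_rfl, mc_eq_sum D hp hq le_rfl, Finset.smul_sum]
  refine Finset.sum_congr rfl fun i _ => ?_
  rw [map_smul, LinearMap.smul_apply, smul_comm]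

lemma mc_smul_right (s : k) (a b : LQAlg k H V R1 R2) :
    mc D a (s • b) = s • mc D a b := by
  obtain ⟨p, hp⟩ := exists_filt a
  obtain ⟨q, hq⟩ := exists_filt b
  have hsb : s • b ∈ mapF k H V (lqRels k H V R1 R2) q := Submodule.smul_mem _ _ hq
  rw [mc_eq_sum D hp hsb le_rfl, mc_eq_sum D hp hq le_rfl, Finset.smul_sum]
  refine Finset.sum_congr rfl fun i _ => ?_
  rw [map_smul, smul_comm]

lemma mc_zero_left (b : LQAlg k H V R1 R2) : mc D 0 b = 0 := by
  simp [mc]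

lemma mc_zero_right (a : LQAlg k H V R1 R2) : mc D a 0 = 0 := by
  simp [mc]

lemma mc_one_left (a : LQAlg k H V R1 R2) : mc D 1 a = a := by
  obtain ⟨q, hq⟩ := exists_filt a
  rw [mc_eq_sum (N := q) D (one_mem_mapF0 k H V _) hq (by omega)]
  rw [Finset.sum_eq_single 0]
  · rw [pow_zero, one_smul, D.hmu0, one_mul]
  · intro i _ hne
    rw [(D.hunital i (by omega) a).1, smul_zero]
  · intro h
    exact absurd (Finset.mem_range.mpr (by omega)) h

lemma mc_one_right (a : LQAlg k H V R1 R2) : mc D a 1 = a := by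
  obtain ⟨q, hq⟩ := exists_filt a
  rw [mc_eq_sum (N := q) D hq (one_mem_mapF0 k H V _) (by omega)]
  rw [Finset.sum_eq_single 0]
  · rw [pow_zero, one_smul, D.hmu0, mul_one]
  · intro i _ hne
    rw [(D.hunital i (by omega) a).2, smul_zero]
  · intro h
    exact absurd (Finset.mem_range.mpr (by omega)) h

lemma mc_assoc (a b e : LQAlg k H V R1 R2) :
    mc D (mc D a b) e = mc D a (mc D b e) := by
  obtain ⟨pa, hpa⟩ := exists_filt a
  obtain ⟨pb, hpb⟩ := exists_filt b
  obtain ⟨pe, hpe⟩ := exists_filt e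
  set P := max pa (max pb pe) with hP
  have ha : a ∈ mapF k H V (lqRels k H V R1 R2) P :=
    mapF_mono k H V _ (le_max_left _ _) hpa
  have hb : b ∈ mapF k H V (lqRels k H V R1 R2) P :=
    mapF_mono k H V _ (le_trans (le_max_left _ _) (le_max_right _ _)) hpb
  have he : e ∈ mapF k H V (lqRels k H V R1 R2) P :=
    mapF_mono k H V _ (le_trans (le_max_right _ _) (le_max_right _ _)) hpe
  have hab : mc D a b ∈ mapF k H V (lqRels k H V R1 R2) (P + P) := mc_mem D ha hb
  have hbe : mc D b e ∈ mapF k H V (lqRels k H V R1 R2) (P + P) := mc_mem D hb he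
  set N := P + P + P with hN
  have hL : mc D (mc D a b) e = ∑ i ∈ Finset.range (N + 1), ∑ j ∈ Finset.range (N + 1),
      D.c ^ (i + j) • D.mu i (D.mu j a b) e := by
    rw [mc_eq_sum D hab he (show P + P + P ≤ N from le_rfl)]
    refine Finset.sum_congr rfl fun i _ => ?_
    rw [mc_eq_sum D ha hb (show P + P ≤ N by omega), map_sum, LinearMap.sum_apply,
      Finset.smul_sum]
    refine Finset.sum_congr rfl fun j _ => ?_
    rw [map_smul, LinearMap.smul_apply, smul_smul, ← pow_add]
  have hR : mc D a (mc D b e) = ∑ i ∈ Finset.range (N + 1), ∑ j ∈ Finset.range (N + 1),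
      D.c ^ (i + j) • D.mu i a (D.mu j b e) := by
    rw [mc_eq_sum D ha hbe (show P + (P + P) ≤ N by omega)]
    refine Finset.sum_congr rfl fun i _ => ?_
    rw [mc_eq_sum D hb he (show P + P ≤ N by omega), map_sum, Finset.smul_sum]
    refine Finset.sum_congr rfl fun j _ => ?_
    rw [map_smul, smul_smul, ← pow_add]
  have hvL : ∀ i j, N < i + j → D.c ^ (i + j) • D.mu i (D.mu j a b) e = 0 := by
    intro i j hij
    rcases le_or_gt j (P + P) with hj | hj
    · have hmem := (mu_bound D ha hb j).1
      rw [mu_zero D hmem he (show P + P - j + P < i by omega), smul_zero]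
    · rw [mu_zero D ha hb (show P + P < j from hj), map_zero, LinearMap.zero_apply,
        smul_zero]
  have hvR : ∀ i j, N < i + j → D.c ^ (i + j) • D.mu i a (D.mu j b e) = 0 := by
    intro i j hij
    rcases le_or_gt j (P + P) with hj | hj
    · have hmem := (mu_bound D hb he j).1
      rw [mu_zero D ha hmem (show P + (P + P - j) < i by omega), smul_zero]
    · rw [mu_zero D hb he (show P + P < j from hj), map_zero, smul_zero]
  rw [hL, hR, sum_square_eq_sum_antidiag hvL, sum_square_eq_sum_antidiag hvR]
  refine Finset.sum_congr rfl fun n hn => ?_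
  calc ∑ i ∈ Finset.range (n + 1), D.c ^ (i + (n - i)) • D.mu i (D.mu (n - i) a b) e
      = ∑ i ∈ Finset.range (n + 1), D.c ^ n • D.mu i (D.mu (n - i) a b) e := by
        refine Finset.sum_congr rfl fun i hi => ?_
        rw [Finset.mem_range] at hi
        rw [show i + (n - i) = n by omega]
    _ = D.c ^ n • ∑ i ∈ Finset.range (n + 1), D.mu i (D.mu (n - i) a b) e :=
        (Finset.smul_sum).symm
    _ = D.c ^ n • ∑ i ∈ Finset.range (n + 1), D.mu i a (D.mu (n - i) b e) := by
        rw [D.hassoc n a b e]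
    _ = ∑ i ∈ Finset.range (n + 1), D.c ^ n • D.mu i a (D.mu (n - i) b e) :=
        Finset.smul_sum
    _ = ∑ i ∈ Finset.range (n + 1), D.c ^ (i + (n - i)) • D.mu i a (D.mu (n - i) b e) := by
        refine Finset.sum_congr rfl fun i hi => ?_
        rw [Finset.mem_range] at hi
        rw [show i + (n - i) = n by omega]

/-- The fiber algebra `A_t|_{t=c}` as a type synonym with the `mc` multiplication. -/
def Ac (D : Defm k H V R1 R2) : Type _ := LQAlg k H V R1 R2

instance : AddCommGroup (Ac D) := inferInstanceAs (AddCommGroup (LQAlg k H V R1 R2))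
instance : Module k (Ac D) := inferInstanceAs (Module k (LQAlg k H V R1 R2))

noncomputable instance : Ring (Ac D) :=
  { (inferInstance : AddCommGroup (Ac D)) with
    mul := fun a b => mc D a b
    one := (1 : LQAlg k H V R1 R2)
    mul_assoc := mc_assoc D
    one_mul := mc_one_left D
    mul_one := mc_one_right D
    left_distrib := fun a b e => mc_add_right D a b e
    right_distrib := fun a b e => mc_add_left D a b e
    zero_mul := mc_zero_left D
    mul_zero := mc_zero_right D }

lemma Ac_mul_def (a b : Ac D) : a * b = mc D a b := rfl
lemma Ac_one_def : (1 : Ac D) = (1 : LQAlg k H V R1 R2) := rfl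

noncomputable instance : Algebra k (Ac D) :=
  Algebra.ofModule (fun s x y => mc_smul_left D s x y) (fun s x y => mc_smul_right D s x y)

/-- Identification of the fiber with `A` as `k`-modules. -/
def toA : Ac D →ₗ[k] LQAlg k H V R1 R2 where
  toFun x := x
  map_add' _ _ := rfl
  map_smul' _ _ := rfl

def ofA : LQAlg k H V R1 R2 →ₗ[k] Ac D where
  toFun x := x
  map_add' _ _ := rfl
  map_smul' _ _ := rfl

@[simp] lemma toA_ofA (x : LQAlg k H V R1 R2) : toA D (ofA D x) = x := rfl
@[simp] lemma ofA_toA (x : Ac D) : ofA D (toA D x) = x := rfl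

/-- The projection `TF → A`. -/
noncomputable def piA : TF k H V →ₐ[k] LQAlg k H V R1 R2 :=
  RingQuot.mkAlgHom k (presRel k H V (lqRels k H V R1 R2))

/-- The evaluation map `TF → A_c`. -/
noncomputable def phi : TF k H V →ₐ[k] Ac D :=
  TensorAlgebra.lift k ((ofA D).comp
    ((piA (R1 := R1) (R2 := R2)).toLinearMap.comp (TensorAlgebra.ι k)))

/-- `phi` as a linear map into `A`. -/
noncomputable def phiL : TF k H V →ₗ[k] LQAlg k H V R1 R2 :=
  (toA D).comp (phi D).toLinearMap

lemma phiL_iota (p : H × V) :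
    phiL D (TensorAlgebra.ι k p) = piA (R1 := R1) (R2 := R2) (TensorAlgebra.ι k p) := by
  rw [phiL, LinearMap.comp_apply, AlgHom.toLinearMap_apply, phi,
    TensorAlgebra.lift_ι_apply]
  rfl

lemma phiL_jH (h : H) : phiL D (jH k H V h) = piA (R1 := R1) (R2 := R2) (jH k H V h) := by
  have : jH k H V h = TensorAlgebra.ι k ((h, 0) : H × V) := by
    simp [jH, LinearMap.inl_apply]
  rw [this, phiL_iota]

lemma phiL_jV (v : V) : phiL D (jV k H V v) = piA (R1 := R1) (R2 := R2) (jV k H V v) := by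
  have : jV k H V v = TensorAlgebra.ι k ((0, v) : H × V) := by
    simp [jV, LinearMap.inr_apply]
  rw [this, phiL_iota]

lemma phiL_one : phiL D 1 = 1 := by
  rw [phiL, LinearMap.comp_apply, AlgHom.toLinearMap_apply, map_one]
  rfl

lemma phiL_mul (x y : TF k H V) :
    phiL D (x * y) = mc D (phiL D x) (phiL D y) := by
  rw [phiL, LinearMap.comp_apply, AlgHom.toLinearMap_apply, map_mul]
  rfl

lemma phiL_algebraMap (s : k) :
    phiL D (algebraMap k (TF k H V) s)
      = piA (R1 := R1) (R2 := R2) (algebraMap k (TF k H V) s) := by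
  rw [phiL, LinearMap.comp_apply, AlgHom.toLinearMap_apply, AlgHom.commutes,
    AlgHom.commutes]
  rw [Algebra.algebraMap_eq_smul_one, Algebra.algebraMap_eq_smul_one]
  rfl

lemma phiL_HF {x : TF k H V} (hx : x ∈ HF k H V) :
    phiL D x = piA (R1 := R1) (R2 := R2) x := by
  obtain ⟨h, s, rfl⟩ := (mem_HF_iff k H V).mp hx
  rw [map_add, map_add, phiL_jH, phiL_algebraMap]

lemma pi_grade_mem {n : ℕ} {x : TF k H V} (hx : x ∈ gradeF k H V n) :
    piA (R1 := R1) (R2 := R2) x ∈ mapG k H V (lqRels k H V R1 R2) n :=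
  Submodule.mem_map_of_mem hx

lemma pi_pred_mem {n : ℕ} {x : TF k H V} (hx : x ∈ filtFpred k H V n) :
    piA (R1 := R1) (R2 := R2) x ∈ mapP k H V (lqRels k H V R1 R2) n :=
  Submodule.mem_map_of_mem hx

/-- Sub-lemma: on `VF * HF` the deformation evaluation agrees with `π` mod degree 0. -/
lemma phi_sub_pi_VH {y : TF k H V} (hy : y ∈ VF k H V * HF k H V) :
    phiL D y - piA (R1 := R1) (R2 := R2) y ∈ mapP k H V (lqRels k H V R1 R2) 1 := by
  refine Submodule.mul_induction_on hy ?_ ?_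
  · intro v hv h hh
    obtain ⟨v0, rfl⟩ := hv
    rw [phiL_mul, phiL_jV, phiL_HF D hh, map_mul]
    have h1 : piA (R1 := R1) (R2 := R2) (jV k H V v0)
        ∈ mapF k H V (lqRels k H V R1 R2) 1 :=
      mapG_le_mapF k H V _ le_rfl (pi_grade_mem (R1 := R1) (R2 := R2) (jV_mem_grade1 k H V v0))
    have h0 : piA (R1 := R1) (R2 := R2) h ∈ mapF k H V (lqRels k H V R1 R2) 0 := by
      refine mapG_le_mapF k H V _ le_rfl (pi_grade_mem (R1 := R1) (R2 := R2) ?_)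
      rw [gradeF_zero]; exact hh
    have h2 := mc_sub_mul D h1 h0
    rw [Nat.add_zero] at h2
    exact h2
  · intro x y hx hy
    rw [map_add, map_add]
    have e : phiL D x + phiL D y - (piA (R1 := R1) (R2 := R2) x + piA (R1 := R1) (R2 := R2) y)
        = (phiL D x - piA (R1 := R1) (R2 := R2) x)
          + (phiL D y - piA (R1 := R1) (R2 := R2) y) := by abel
    rw [e]
    exact Submodule.add_mem _ hx hy

/-- Lemma L: the deformation evaluation agrees with `π` modulo lower filtration. -/
lemma phi_sub_pi {n : ℕ} {x : TF k H V} (hx : x ∈ gradeF k H V n) :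
    phiL D x - piA (R1 := R1) (R2 := R2) x ∈ mapP k H V (lqRels k H V R1 R2) n := by
  induction n generalizing x with
  | zero =>
      rw [gradeF_zero] at hx
      rw [phiL_HF D hx, sub_self]
      exact Submodule.zero_mem _
  | succ n ih =>
      rw [gradeF_succ] at hx
      refine Submodule.mul_induction_on hx ?_ ?_
      · intro g hg y hy
        have hφg : phiL D g ∈ mapF k H V (lqRels k H V R1 R2) n := by
          have : phiL D g = piA (R1 := R1) (R2 := R2) g
              + (phiL D g - piA (R1 := R1) (R2 := R2) g) := by abel
          rw [this]
          exact Submodule.add_mem _ (mapG_le_mapF k H V _ le_rfl (pi_grade_mem (R1 := R1) (R2 := R2) hg))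
            (mapP_le_mapF k H V _ (ih hg))
        have hφy : phiL D y ∈ mapF k H V (lqRels k H V R1 R2) 1 := by
          have : phiL D y = piA (R1 := R1) (R2 := R2) y
              + (phiL D y - piA (R1 := R1) (R2 := R2) y) := by abel
          rw [this]
          refine Submodule.add_mem _
            (mapG_le_mapF k H V _ le_rfl (pi_grade_mem (R1 := R1) (R2 := R2) (VH_le_grade1 k H V hy)))
            (mapP_le_mapF k H V _ (phi_sub_pi_VH D hy))
        have key : phiL D (g * y) - piA (R1 := R1) (R2 := R2) (g * y)
            = (mc D (phiL D g) (phiL D y) - phiL D g * phiL D y)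
              + ((phiL D g - piA (R1 := R1) (R2 := R2) g) * phiL D y
              + piA (R1 := R1) (R2 := R2) g
                  * (phiL D y - piA (R1 := R1) (R2 := R2) y)) := by
          rw [phiL_mul, map_mul, mul_sub, sub_mul]
          abel
        rw [key]
        refine Submodule.add_mem _ ?_ (Submodule.add_mem _ ?_ ?_)
        · exact mapP_mono k H V _ (by omega) (mc_sub_mul D hφg hφy)
        · exact mapP_mul_mapF k H V _ n 1 (Submodule.mul_mem_mul (ih hg) hφy)
        · refine mapF_mul_mapP k H V _ n 1 (Submodule.mul_mem_mul
            (mapG_le_mapF k H V _ le_rfl (pi_grade_mem (R1 := R1) (R2 := R2) hg)) (phi_sub_pi_VH D hy))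
      · intro x y hx hy
        rw [map_add, map_add]
        have e : phiL D x + phiL D y
            - (piA (R1 := R1) (R2 := R2) x + piA (R1 := R1) (R2 := R2) y)
            = (phiL D x - piA (R1 := R1) (R2 := R2) x)
              + (phiL D y - piA (R1 := R1) (R2 := R2) y) := by abel
        rw [e]
        exact Submodule.add_mem _ hx hy

lemma phi_grade_mem {n : ℕ} {x : TF k H V} (hx : x ∈ gradeF k H V n) :
    phiL D x ∈ mapF k H V (lqRels k H V R1 R2) n := by
  have : phiL D x = piA (R1 := R1) (R2 := R2) x
      + (phiL D x - piA (R1 := R1) (R2 := R2) x) := by abel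
  rw [this]
  exact Submodule.add_mem _ (mapG_le_mapF k H V _ le_rfl (pi_grade_mem (R1 := R1) (R2 := R2) hx))
    (mapP_le_mapF k H V _ (phi_sub_pi D hx))

lemma phi_pred_mem {n : ℕ} {x : TF k H V} (hx : x ∈ filtFpred k H V n) :
    phiL D x ∈ mapP k H V (lqRels k H V R1 R2) n := by
  have hle : filtFpred k H V n ≤
      Submodule.comap (phiL D) (mapP k H V (lqRels k H V R1 R2) n) := by
    refine iSup₂_le fun i hi => fun y hy => ?_
    simp only [Submodule.mem_comap]
    have : phiL D y = piA (R1 := R1) (R2 := R2) y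
        + (phiL D y - piA (R1 := R1) (R2 := R2) y) := by abel
    rw [this]
    refine Submodule.add_mem _ ?_ (mapP_mono k H V _ (by omega) (phi_sub_pi D hy))
    have hle2 : mapG k H V (lqRels k H V R1 R2) i
        ≤ mapP k H V (lqRels k H V R1 R2) n := by
      rw [mapP_eq_iSup]
      exact le_iSup₂_of_le i hi le_rfl
    exact hle2 (pi_grade_mem (R1 := R1) (R2 := R2) hy)
  exact hle hx

lemma phi_filt_mem {n : ℕ} {x : TF k H V} (hx : x ∈ filtF k H V n) :
    phiL D x ∈ mapF k H V (lqRels k H V R1 R2) n := by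
  rw [filtF_eq_pred_sup_grade] at hx
  obtain ⟨u, hu, g, hg, rfl⟩ := Submodule.mem_sup.mp hx
  rw [map_add]
  exact Submodule.add_mem _ (mapP_le_mapF k H V _ (phi_pred_mem D hu))
    (phi_grade_mem D hg)

lemma lq_homog (hR1 : R1 ≤ gradeF k H V 1) :
    HomogSet k H V (lqRels k H V R1 R2) := by
  rintro p (hp | ⟨r, _, rfl⟩)
  · exact ⟨1, Phi_grade k H V (hR1 hp)⟩
  · exact ⟨2, (mem_EigF_iff k H V).mp (iVV_mem_EigF2 k H V r)⟩

/-- Gradedness of `A`: a degree-`n` homogeneous element with image in lower filtration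
is a relation. -/
lemma grade_cap_low (hR1 : R1 ≤ gradeF k H V 1) {n : ℕ} {x : TF k H V}
    (hx : x ∈ gradeF k H V n)
    (hlow : piA (R1 := R1) (R2 := R2) x ∈ mapP k H V (lqRels k H V R1 R2) n) :
    x ∈ IQ k H V (lqRels k H V R1 R2) := by
  obtain ⟨u, hu, hux⟩ := hlow
  have hxu : x - u ∈ IQ k H V (lqRels k H V R1 R2) := by
    have := (mkQ_eq_iff k H V (lqRels k H V R1 R2) u x).mp hux
    simpa using Submodule.neg_mem _ this
  have hx' : x = (Phi k H V (x - u)).coeff n := by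
    rw [map_sub, Polynomial.coeff_sub, coeff_Phi_filtFpred k H V hu, sub_zero,
      coeff_Phi_grade_self k H V hx]
  rw [hx']
  exact coeff_Phi_IQ k H V (lq_homog hR1) hxu n


lemma iVV_mem_grade2 (r : V ⊗[k] V) : iVV k H V r ∈ gradeF k H V 2 := by
  have : (⊤ : Submodule k (V ⊗[k] V)) ≤
      Submodule.comap (iVV k H V) (gradeF k H V 2) := by
    rw [← TensorProduct.span_tmul_eq_top k V V, Submodule.span_le]
    rintro t ⟨v, w, rfl⟩
    have hv : iVV k H V (v ⊗ₜ[k] w) = jV k H V v * jV k H V w := by simp [iVV]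
    simp only [Submodule.mem_comap, SetLike.mem_coe, hv]
    have h2 : gradeF k H V 2 = gradeF k H V 1 * (VF k H V * HF k H V) := gradeF_succ k H V 1
    rw [h2]
    have hw : jV k H V w ∈ VF k H V * HF k H V := by
      have : jV k H V w = jV k H V w * 1 := (mul_one _).symm
      rw [this]
      exact Submodule.mul_mem_mul (LinearMap.mem_range_self _ w) (one_mem_HF k H V)
    exact Submodule.mul_mem_mul (jV_mem_grade1 k H V v) hw
  exact this trivial

lemma mc_grade0 {a b : LQAlg k H V R1 R2}
    (ha : a ∈ mapF k H V (lqRels k H V R1 R2) 0)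
    (hb : b ∈ mapF k H V (lqRels k H V R1 R2) 0) :
    mc D a b = a * b := by
  rw [mc_eq_sum (N := 0) D ha hb le_rfl, Finset.sum_range_one, pow_zero, one_smul, D.hmu0]

section Deformed

variable (lam : TF k H V →ₗ[k] TF k H V) (alf bet : V ⊗[k] V →ₗ[k] TF k H V)

lemma lemK (hR1 : R1 ≤ gradeF k H V 1)
    (hlamHF : ∀ x, lam x ∈ HF k H V)
    (halfG : ∀ r, alf r ∈ gradeF k H V 1)
    (hbetHF : ∀ r, bet r ∈ HF k H V)
    {z : TF k H V} (hz : z ∈ twoSidedSpan k (lqRels k H V R1 R2)) (n : ℕ) :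
    RingQuot.mkAlgHom k (presRel k H V (lqDefRels k H V R1 R2 lam alf bet))
        ((Phi k H V z).coeff n)
      ∈ mapP k H V (lqDefRels k H V R1 R2 lam alf bet) n := by
  induction hz using Submodule.span_induction generalizing n with
  | mem x hx =>
      obtain ⟨a, p, b, hp, rfl⟩ := hx
      rcases hp with hp1 | ⟨r, hr, rfl⟩
      · have hPhip : Phi k H V p = Polynomial.C p * Polynomial.X ^ (1 : ℕ) :=
          Phi_grade k H V (hR1 hp1)
        rw [map_mul, map_mul, hPhip]
        refine coeff_three_mem k H V (lqDefRels k H V R1 R2 lam alf bet)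
          a b p (lam p) 1 le_rfl ?_ ?_ n
        · show lam p ∈ filtF k H V (1 - 1)
          rw [show (1 : ℕ) - 1 = 0 from rfl, filtF_zero, gradeF_zero]
          exact hlamHF p
        · have hm : p - lam p ∈ lqDefRels k H V R1 R2 lam alf bet := Or.inl ⟨p, hp1, rfl⟩
          have h0 := RingQuot.mkAlgHom_rel k (presRel.mem hm)
          rw [map_sub, map_zero, sub_eq_zero] at h0
          exact h0
      · have hPhip : Phi k H V (iVV k H V r) = Polynomial.C (iVV k H V r)
            * Polynomial.X ^ 2 :=
          (mem_EigF_iff k H V).mp (iVV_mem_EigF2 k H V r)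
        rw [map_mul, map_mul, hPhip]
        refine coeff_three_mem k H V (lqDefRels k H V R1 R2 lam alf bet)
          a b (iVV k H V r) (alf r + bet r) 2 (by omega) ?_ ?_ n
        · show alf r + bet r ∈ filtF k H V (2 - 1)
          rw [show (2 : ℕ) - 1 = 1 from rfl]
          refine Submodule.add_mem _ (gradeF_le_filtF k H V le_rfl (halfG r)) ?_
          refine gradeF_le_filtF k H V (Nat.zero_le 1) ?_
          rw [gradeF_zero]
          exact hbetHF r
        · have hm : iVV k H V r - alf r - bet r ∈ lqDefRels k H V R1 R2 lam alf bet :=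
            Or.inr ⟨r, hr, rfl⟩
          have h0 := RingQuot.mkAlgHom_rel k (presRel.mem hm)
          rw [map_zero, sub_sub, map_sub, sub_eq_zero] at h0
          exact h0
  | zero =>
      rw [map_zero, Polynomial.coeff_zero, map_zero]
      exact Submodule.zero_mem _
  | add x y _ _ hx hy =>
      rw [map_add, Polynomial.coeff_add, map_add]
      exact Submodule.add_mem _ (hx n) (hy n)
  | smul c x _ hx =>
      rw [map_smul, Polynomial.coeff_smul, map_smul]
      exact Submodule.smul_mem _ _ (hx n)

lemma lemK_IQ (hR1 : R1 ≤ gradeF k H V 1)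
    (hlamHF : ∀ x, lam x ∈ HF k H V)
    (halfG : ∀ r, alf r ∈ gradeF k H V 1)
    (hbetHF : ∀ r, bet r ∈ HF k H V)
    {z : TF k H V} (hz : z ∈ IQ k H V (lqRels k H V R1 R2)) (n : ℕ) :
    RingQuot.mkAlgHom k (presRel k H V (lqDefRels k H V R1 R2 lam alf bet))
        ((Phi k H V z).coeff n)
      ∈ mapP k H V (lqDefRels k H V R1 R2 lam alf bet) n := by
  obtain ⟨zb, hzb, zl, hzl, rfl⟩ := Submodule.mem_sup.mp hz
  rw [map_add, Polynomial.coeff_add, map_add]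
  refine Submodule.add_mem _ ?_ (lemK lam alf bet hR1 hlamHF halfG hbetHF hzl n)
  have hb : (Phi k H V zb).coeff n ∈ twoSidedSpan k (baseSet k H V) :=
    coeff_Phi_twoSidedSpan k H V (baseSet_homog k H V) hzb n
  have : RingQuot.mkAlgHom k (presRel k H V (lqDefRels k H V R1 R2 lam alf bet))
      ((Phi k H V zb).coeff n) = 0 := by
    have hIQ : (Phi k H V zb).coeff n ∈ IQ k H V (lqDefRels k H V R1 R2 lam alf bet) :=
      Submodule.mem_sup_left hb
    have := IQ_le_ker k H V _ hIQ
    simpa using this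
  rw [this]
  exact Submodule.zero_mem _

lemma phi_presRel_eq (hkill : ∀ x ∈ lqDefRels k H V R1 R2 lam alf bet, phiL D x = 0) :
    ∀ ⦃x y : TF k H V⦄, presRel k H V (lqDefRels k H V R1 R2 lam alf bet) x y →
      phiL D x = phiL D y := by
  intro x y hxy
  cases hxy with
  | mulH h h' =>
      rw [phiL_mul, phiL_jH, phiL_jH, phiL_jH]
      have h0 : piA (R1 := R1) (R2 := R2) (jH k H V h)
          ∈ mapF k H V (lqRels k H V R1 R2) 0 := by
        refine mapG_le_mapF k H V _ le_rfl (pi_grade_mem (R1 := R1) (R2 := R2) ?_)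
        rw [gradeF_zero]
        exact jH_mem_HF k H V h
      have h0' : piA (R1 := R1) (R2 := R2) (jH k H V h')
          ∈ mapF k H V (lqRels k H V R1 R2) 0 := by
        refine mapG_le_mapF k H V _ le_rfl (pi_grade_mem (R1 := R1) (R2 := R2) ?_)
        rw [gradeF_zero]
        exact jH_mem_HF k H V h'
      rw [mc_grade0 D h0 h0', ← map_mul]
      exact RingQuot.mkAlgHom_rel k (presRel.mulH h h')
  | oneH =>
      rw [phiL_jH, phiL_one]
      calc piA (R1 := R1) (R2 := R2) (jH k H V 1)
          = piA (R1 := R1) (R2 := R2) 1 := RingQuot.mkAlgHom_rel k presRel.oneH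
        _ = 1 := map_one _
  | mem hx =>
      rw [map_zero]
      exact hkill _ hx

lemma phiL_IQdef_zero (hkill : ∀ x ∈ lqDefRels k H V R1 R2 lam alf bet, phiL D x = 0)
    {z : TF k H V} (hz : z ∈ IQ k H V (lqDefRels k H V R1 R2 lam alf bet)) :
    phiL D z = 0 := by
  have hgen : ∀ p, p ∈ baseSet k H V ∪ lqDefRels k H V R1 R2 lam alf bet →
      phiL D p = 0 := by
    rintro p (hp | hp)
    · rcases hp with ⟨h, h', rfl⟩ | rfl
      · rw [map_sub, phi_presRel_eq D lam alf bet hkill (presRel.mulH h h'), sub_self]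
      · rw [map_sub, phi_presRel_eq D lam alf bet hkill (presRel.oneH), phiL_one, sub_self]
    · exact hkill p hp
  have hspan : ∀ (s : Set (TF k H V)), (∀ p ∈ s, phiL D p = 0) →
      ∀ w ∈ twoSidedSpan k s, phiL D w = 0 := by
    intro s hs w hw
    induction hw using Submodule.span_induction with
    | mem x hx =>
        obtain ⟨a, p, b, hp, rfl⟩ := hx
        rw [phiL_mul, phiL_mul, hs p hp, mc_zero_right, mc_zero_left]
    | zero => rw [map_zero]
    | add x y _ _ hx hy => rw [map_add, hx, hy, add_zero]
    | smul c x _ hx => rw [map_smul, hx, smul_zero]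
  obtain ⟨zb, hzb, zl, hzl, rfl⟩ := Submodule.mem_sup.mp hz
  rw [map_add,
    hspan _ (fun p hp => hgen p (Set.mem_union_left _ hp)) zb hzb,
    hspan _ (fun p hp => hgen p (Set.mem_union_right _ hp)) zl hzl, add_zero]

lemma phiL_eq_of_mkDef_eq
    (hkill : ∀ x ∈ lqDefRels k H V R1 R2 lam alf bet, phiL D x = 0)
    {a b : TF k H V}
    (h : RingQuot.mkAlgHom k (presRel k H V (lqDefRels k H V R1 R2 lam alf bet)) a
       = RingQuot.mkAlgHom k (presRel k H V (lqDefRels k H V R1 R2 lam alf bet)) b) :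
    phiL D a = phiL D b := by
  have := (mkQ_eq_iff k H V (lqDefRels k H V R1 R2 lam alf bet) a b).mp h
  have h2 := phiL_IQdef_zero D lam alf bet hkill this
  rw [map_sub, sub_eq_zero] at h2
  exact h2

/-- Main injectivity lemma. -/
lemma inj_main (hR1 : R1 ≤ gradeF k H V 1)
    (hlamHF : ∀ x, lam x ∈ HF k H V)
    (halfG : ∀ r, alf r ∈ gradeF k H V 1)
    (hbetHF : ∀ r, bet r ∈ HF k H V)
    (hkill : ∀ x ∈ lqDefRels k H V R1 R2 lam alf bet, phiL D x = 0) :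
    ∀ n, ∀ y ∈ filtF k H V n, phiL D y = 0 →
      RingQuot.mkAlgHom k (presRel k H V (lqDefRels k H V R1 R2 lam alf bet)) y = 0 := by
  intro n
  induction n using Nat.strong_induction_on with
  | _ n ih =>
    intro y hy hphi
    rw [filtF_eq_pred_sup_grade] at hy
    obtain ⟨u, hu, g, hg, rfl⟩ := Submodule.mem_sup.mp hy
    have h2 : piA (R1 := R1) (R2 := R2) g ∈ mapP k H V (lqRels k H V R1 R2) n := by
      have hg1 := phi_sub_pi D hg
      have hu1 : phiL D u ∈ mapP k H V (lqRels k H V R1 R2) n := phi_pred_mem D hu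
      have e : piA (R1 := R1) (R2 := R2) g
          = - phiL D u - (phiL D g - piA (R1 := R1) (R2 := R2) g) := by
        rw [map_add] at hphi
        have : phiL D g = - phiL D u := by
          rw [eq_neg_iff_add_eq_zero, add_comm]
          exact hphi
        rw [← this]
        abel
      rw [e]
      exact Submodule.sub_mem _ (Submodule.neg_mem _ hu1) hg1
    have h3 : g ∈ IQ k H V (lqRels k H V R1 R2) := grade_cap_low hR1 hg h2
    have h4 : RingQuot.mkAlgHom k (presRel k H V (lqDefRels k H V R1 R2 lam alf bet)) g
        ∈ mapP k H V (lqDefRels k H V R1 R2 lam alf bet) n := by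
      have hcoeff : (Phi k H V g).coeff n = g := coeff_Phi_grade_self k H V hg
      rw [← hcoeff]
      exact lemK_IQ lam alf bet hR1 hlamHF halfG hbetHF h3 n
    cases n with
    | zero =>
        rw [mapP_zero] at h4
        rw [filtFpred_zero] at hu
        rw [(Submodule.mem_bot _).mp hu, zero_add]
        exact (Submodule.mem_bot _).mp h4
    | succ m =>
        rw [mapP_succ] at h4
        obtain ⟨y', hy', hy'eq⟩ := h4
        rw [AlgHom.toLinearMap_apply] at hy'eq
        have hu' : u ∈ filtF k H V m := by rwa [filtFpred_succ] at hu
        have hz : u + y' ∈ filtF k H V m := Submodule.add_mem _ hu' hy'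
        have hphiz : phiL D (u + y') = 0 := by
          rw [map_add, phiL_eq_of_mkDef_eq D lam alf bet hkill hy'eq, ← map_add]
          exact hphi
        have h5 := ih m (Nat.lt_succ_self m) _ hz hphiz
        have e : RingQuot.mkAlgHom k
              (presRel k H V (lqDefRels k H V R1 R2 lam alf bet)) (u + g)
            = RingQuot.mkAlgHom k
              (presRel k H V (lqDefRels k H V R1 R2 lam alf bet)) (u + y') := by
          rw [map_add, map_add, hy'eq]
        rw [e, h5]

/-- Strong PBW property. -/
lemma strongPBW_lemma (hR1 : R1 ≤ gradeF k H V 1)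
    (hkill : ∀ x ∈ lqDefRels k H V R1 R2 lam alf bet, phiL D x = 0) :
    IsStrongPBWofLQ k H V R1 R2 lam alf bet := by
  intro n x hx
  obtain ⟨hgrade, hmix⟩ := hx
  obtain ⟨j, hj, f, hf, hsum⟩ := Submodule.mem_sup.mp hmix
  have hj0 : phiL D j = 0 := phiL_IQdef_zero D lam alf bet hkill hj
  have hπ : piA (R1 := R1) (R2 := R2) x ∈ mapP k H V (lqRels k H V R1 R2) n := by
    have e : piA (R1 := R1) (R2 := R2) x
        = phiL D f - (phiL D x - piA (R1 := R1) (R2 := R2) x) := by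
      have : phiL D x = phiL D f := by
        rw [← hsum, map_add, hj0, zero_add]
      rw [← this]
      abel
    rw [e]
    exact Submodule.sub_mem _ (phi_pred_mem D hf) (phi_sub_pi D hgrade)
  exact grade_cap_low hR1 hgrade hπ

/-- Image of the filtration under `phiL` is the filtration of `A`. -/
lemma phiL_filt_eq (n : ℕ) :
    Submodule.map (phiL D) (filtF k H V n) = mapF k H V (lqRels k H V R1 R2) n := by
  induction n with
  | zero =>
      apply le_antisymm
      · rintro _ ⟨x, hx, rfl⟩
        exact phi_filt_mem D hx
      · rintro _ ⟨x, hx, rfl⟩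
        refine ⟨x, hx, ?_⟩
        rw [filtF_zero, gradeF_zero] at hx
        exact phiL_HF D hx
  | succ n ih =>
      apply le_antisymm
      · rintro _ ⟨x, hx, rfl⟩
        exact phi_filt_mem D hx
      · rintro y hy
        obtain ⟨x, hx, rfl⟩ := hy
        rw [filtF_eq_pred_sup_grade] at hx
        obtain ⟨u, hu, g, hg, rfl⟩ := Submodule.mem_sup.mp hx
        rw [filtFpred_succ] at hu
        have hπu : piA (R1 := R1) (R2 := R2) u
            ∈ Submodule.map (phiL D) (filtF k H V n) := by
          rw [ih]
          exact Submodule.mem_map_of_mem hu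
        obtain ⟨z1, hz1, hz1e⟩ := hπu
        have hw : phiL D g - piA (R1 := R1) (R2 := R2) g
            ∈ Submodule.map (phiL D) (filtF k H V n) := by
          rw [ih, ← mapP_succ]
          exact phi_sub_pi D hg
        obtain ⟨z2, hz2, hz2e⟩ := hw
        refine ⟨z1 + (g - z2), ?_, ?_⟩
        · refine Submodule.add_mem _ (filtF_mono k H V (Nat.le_succ n) hz1) ?_
          exact Submodule.sub_mem _ (gradeF_le_filtF k H V le_rfl hg)
            (filtF_mono k H V (Nat.le_succ n) hz2)
        · rw [map_add, map_sub, hz1e, hz2e, map_add]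
          abel

end Deformed

section FieldPart

variable {k H V : Type*} [Field k] [Ring H] [Algebra k H]
  [AddCommGroup V] [Module k V]
  {R1 : Submodule k (TF k H V)} {R2 : Submodule k (V ⊗[k] V)}
  (D : Defm k H V R1 R2)

lemma pi_rel_zero1 {r : TF k H V} (hr : r ∈ R1) :
    piA (R1 := R1) (R2 := R2) r = 0 := by
  have hm : r ∈ lqRels k H V R1 R2 := Set.mem_union_left _ hr
  have := RingQuot.mkAlgHom_rel k (presRel.mem hm)
  rw [map_zero] at this
  exact this

lemma pi_rel_zero2 {r : V ⊗[k] V} (hr : r ∈ R2) :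
    piA (R1 := R1) (R2 := R2) (iVV k H V r) = 0 := by
  have hm : iVV k H V r ∈ lqRels k H V R1 R2 := Set.mem_union_right _ ⟨r, hr, rfl⟩
  have := RingQuot.mkAlgHom_rel k (presRel.mem hm)
  rw [map_zero] at this
  exact this

lemma exists_lab (hR1 : R1 ≤ gradeF k H V 1) :
    ∃ (lam : TF k H V →ₗ[k] TF k H V) (alf bet : V ⊗[k] V →ₗ[k] TF k H V),
      (∀ x, lam x ∈ HF k H V) ∧ (∀ r, alf r ∈ gradeF k H V 1) ∧
      (∀ r, bet r ∈ HF k H V) ∧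
      (∀ x ∈ lqDefRels k H V R1 R2 lam alf bet, phiL D x = 0) := by
  classical
  set N0 := mapF k H V (lqRels k H V R1 R2) 0 with hN0def
  -- the degree-0 surjection and a section of it
  have hmemHF : ∀ x : HF k H V,
      (piA (R1 := R1) (R2 := R2)).toLinearMap ((HF k H V).subtype x) ∈ N0 := by
    intro x
    refine Submodule.mem_map_of_mem ?_
    rw [filtF_zero, gradeF_zero]
    exact x.2
  set f0 : HF k H V →ₗ[k] N0 := LinearMap.codRestrict N0
    ((piA (R1 := R1) (R2 := R2)).toLinearMap.comp (HF k H V).subtype) hmemHF with hf0def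
  have hf0surj : Function.Surjective f0 := by
    rintro ⟨y, hy⟩
    obtain ⟨x, hx, rfl⟩ := hy
    rw [filtF_zero, gradeF_zero] at hx
    exact ⟨⟨x, hx⟩, rfl⟩
  letI : Module.Free k N0 := Module.Free.of_divisionRing k N0
  letI : Module.Projective k N0 := Module.Projective.of_free
  obtain ⟨g0, hg0⟩ := f0.exists_rightInverse_of_surjective
    (LinearMap.range_eq_top.mpr hf0surj)
  have hg0' : ∀ y : N0,
      piA (R1 := R1) (R2 := R2) ((g0 y : HF k H V) : TF k H V) = (y : LQAlg k H V R1 R2) := by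
    intro y
    have h1 : f0 (g0 y) = y := LinearMap.ext_iff.mp hg0 y
    have h2 := congrArg (fun z : N0 => (z : LQAlg k H V R1 R2)) h1
    exact h2
  -- projection onto R1
  obtain ⟨q1, hq1⟩ := Submodule.exists_isCompl R1
  set pr1 : TF k H V →ₗ[k] R1 := R1.linearProjOfIsCompl q1 hq1 with hpr1def
  -- the degree-1 correction of phi on R1
  have hψ1mem : ∀ x : R1, ((phiL D).comp R1.subtype) x ∈ N0 := by
    rintro ⟨r, hr⟩
    have h1 := phi_sub_pi D (hR1 hr)
    rw [mapP_succ, ← hN0def] at h1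
    have h2 : piA (R1 := R1) (R2 := R2) r = 0 := pi_rel_zero1 hr
    rw [h2, sub_zero] at h1
    exact h1
  set ψ1 : R1 →ₗ[k] N0 :=
    LinearMap.codRestrict N0 ((phiL D).comp R1.subtype) hψ1mem with hψ1def
  set lam : TF k H V →ₗ[k] TF k H V :=
    (HF k H V).subtype ∘ₗ g0 ∘ₗ ψ1 ∘ₗ pr1 with hlamdef
  have hlamHF : ∀ x, lam x ∈ HF k H V := fun x => (g0 (ψ1 (pr1 x))).2
  have hlam : ∀ r, r ∈ R1 → phiL D (lam r) = phiL D r := by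
    intro r hr
    have e1 : lam r = ((g0 (ψ1 ⟨r, hr⟩) : HF k H V) : TF k H V) := by
      simp only [hlamdef, LinearMap.comp_apply]
      rw [show pr1 r = ⟨r, hr⟩ from Submodule.linearProjOfIsCompl_apply_left hq1 ⟨r, hr⟩]
      rfl
    rw [e1, phiL_HF D (g0 (ψ1 ⟨r, hr⟩)).2, hg0' (ψ1 ⟨r, hr⟩)]
    rfl
  -- construction of alpha
  set q0 : LQAlg k H V R1 R2 →ₗ[k] LQAlg k H V R1 R2 ⧸ N0 := N0.mkQ with hq0def
  set g1 : gradeF k H V 1 →ₗ[k] LQAlg k H V R1 R2 ⧸ N0 :=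
    q0 ∘ₗ (phiL D) ∘ₗ (gradeF k H V 1).subtype with hg1def
  letI : Module.Free k (LinearMap.range g1) := Module.Free.of_divisionRing k _
  letI : Module.Projective k (LinearMap.range g1) := Module.Projective.of_free
  obtain ⟨s1, hs1⟩ := g1.rangeRestrict.exists_rightInverse_of_surjective
    (LinearMap.range_eq_top.mpr (LinearMap.surjective_rangeRestrict g1))
  have hg1s1 : ∀ y : LinearMap.range g1, g1 (s1 y) = (y : LQAlg k H V R1 R2 ⧸ N0) := by
    intro y
    have h1 : g1.rangeRestrict (s1 y) = y := LinearMap.ext_iff.mp hs1 y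
    exact congrArg (fun z : LinearMap.range g1 => (z : LQAlg k H V R1 R2 ⧸ N0)) h1
  have hrange : ∀ x : R2,
      (q0 ∘ₗ (phiL D) ∘ₗ (iVV k H V) ∘ₗ R2.subtype) x ∈ LinearMap.range g1 := by
    rintro ⟨r, hr⟩
    have h2 : piA (R1 := R1) (R2 := R2) (iVV k H V r) = 0 := pi_rel_zero2 hr
    have h1 : phiL D (iVV k H V r) ∈ mapF k H V (lqRels k H V R1 R2) 1 := by
      have h3 := phi_sub_pi D (iVV_mem_grade2 r)
      rw [mapP_succ, h2, sub_zero] at h3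
      exact h3
    rw [mapF_eq_sup] at h1
    obtain ⟨w0, hw0, w1, hw1, hsum⟩ := Submodule.mem_sup.mp h1
    obtain ⟨x1, hx1, rfl⟩ := hw1
    refine ⟨⟨x1, hx1⟩, ?_⟩
    show q0 (phiL D x1) = q0 (phiL D (iVV k H V r))
    rw [hq0def, Submodule.mkQ_apply, Submodule.mkQ_apply, Submodule.Quotient.eq]
    have hd1 : phiL D x1 - piA (R1 := R1) (R2 := R2) x1 ∈ N0 := by
      have := phi_sub_pi D hx1
      rwa [mapP_succ, ← hN0def] at this
    have hd2 : w0 ∈ N0 := by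
      rw [hN0def, ← mapP_succ k H V (lqRels k H V R1 R2) 0]
      exact hw0
    have e : phiL D x1 - phiL D (iVV k H V r)
        = (phiL D x1 - piA (R1 := R1) (R2 := R2) x1) - w0 := by
      rw [← hsum]
      abel
    rw [e]
    exact Submodule.sub_mem _ hd1 hd2
  obtain ⟨q2, hq2⟩ := Submodule.exists_isCompl R2
  set pr2 : V ⊗[k] V →ₗ[k] R2 := R2.linearProjOfIsCompl q2 hq2 with hpr2def
  set h2' : R2 →ₗ[k] LinearMap.range g1 := LinearMap.codRestrict _
    (q0 ∘ₗ (phiL D) ∘ₗ (iVV k H V) ∘ₗ R2.subtype) hrange with hh2def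
  set alf : V ⊗[k] V →ₗ[k] TF k H V :=
    (gradeF k H V 1).subtype ∘ₗ s1 ∘ₗ h2' ∘ₗ pr2 with halfdef
  have halfG : ∀ r, alf r ∈ gradeF k H V 1 := fun r => (s1 (h2' (pr2 r))).2
  have halfprop : ∀ r, ∀ hr : r ∈ R2,
      q0 (phiL D (alf r)) = q0 (phiL D (iVV k H V r)) := by
    intro r hr
    have e1 : alf r = ((s1 (h2' ⟨r, hr⟩) : gradeF k H V 1) : TF k H V) := by
      simp only [halfdef, LinearMap.comp_apply]
      rw [show pr2 r = ⟨r, hr⟩ from Submodule.linearProjOfIsCompl_apply_left hq2 ⟨r, hr⟩]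
      rfl
    rw [e1]
    have e2 : q0 (phiL D ((s1 (h2' ⟨r, hr⟩) : gradeF k H V 1) : TF k H V))
        = g1 (s1 (h2' ⟨r, hr⟩)) := rfl
    rw [e2, hg1s1]
    rfl
  -- construction of beta
  have hψ2mem : ∀ x : R2,
      (((phiL D) ∘ₗ (iVV k H V) ∘ₗ R2.subtype) - ((phiL D) ∘ₗ alf ∘ₗ R2.subtype)) x
        ∈ N0 := by
    rintro ⟨r, hr⟩
    have h1 := halfprop r hr
    rw [hq0def, Submodule.mkQ_apply, Submodule.mkQ_apply, Submodule.Quotient.eq] at h1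
    have := Submodule.neg_mem _ h1
    rw [neg_sub] at this
    exact this
  set ψ2 : R2 →ₗ[k] N0 := LinearMap.codRestrict N0
    (((phiL D) ∘ₗ (iVV k H V) ∘ₗ R2.subtype) - ((phiL D) ∘ₗ alf ∘ₗ R2.subtype))
    hψ2mem with hψ2def
  set bet : V ⊗[k] V →ₗ[k] TF k H V :=
    (HF k H V).subtype ∘ₗ g0 ∘ₗ ψ2 ∘ₗ pr2 with hbetdef
  have hbetHF : ∀ r, bet r ∈ HF k H V := fun r => (g0 (ψ2 (pr2 r))).2
  have hbet : ∀ r, ∀ hr : r ∈ R2,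
      phiL D (bet r) = phiL D (iVV k H V r) - phiL D (alf r) := by
    intro r hr
    have e1 : bet r = ((g0 (ψ2 ⟨r, hr⟩) : HF k H V) : TF k H V) := by
      simp only [hbetdef, LinearMap.comp_apply]
      rw [show pr2 r = ⟨r, hr⟩ from Submodule.linearProjOfIsCompl_apply_left hq2 ⟨r, hr⟩]
      rfl
    rw [e1, phiL_HF D (g0 (ψ2 ⟨r, hr⟩)).2, hg0' (ψ2 ⟨r, hr⟩)]
    rfl
  refine ⟨lam, alf, bet, hlamHF, halfG, hbetHF, ?_⟩
  rintro x (⟨r, hr, rfl⟩ | ⟨r, hr, rfl⟩)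
  · rw [map_sub, hlam r hr, sub_self]
  · rw [map_sub, map_sub, hbet r hr]
    abel

/-- The master lemma, producing everything needed for the main theorem. -/
theorem master (hR1 : R1 ≤ gradeF k H V 1) :
    ∃ (lam : TF k H V →ₗ[k] TF k H V) (alf bet : V ⊗[k] V →ₗ[k] TF k H V),
      (∀ x, lam x ∈ HF k H V) ∧
      (∀ r : V ⊗[k] V, alf r ∈ gradeF k H V 1) ∧
      (∀ r : V ⊗[k] V, bet r ∈ HF k H V) ∧
      IsStrongPBWofLQ k H V R1 R2 lam alf bet ∧
      ∃ Θ : LQDefAlg k H V R1 R2 lam alf bet ≃ₗ[k] LQAlg k H V R1 R2,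
        Θ 1 = 1 ∧
        (∀ n, Submodule.map Θ.toLinearMap (filtLQDef k H V R1 R2 lam alf bet n)
          = filtLQ k H V R1 R2 n) ∧
        (∀ (x y : LQDefAlg k H V R1 R2 lam alf bet) (m n : ℕ),
          Θ x ∈ filtLQ k H V R1 R2 m → Θ y ∈ filtLQ k H V R1 R2 n →
          Θ (x * y) = ∑ i ∈ Finset.range (m + n + 1), D.c ^ i • D.mu i (Θ x) (Θ y)) := by
  obtain ⟨lam, alf, bet, hlamHF, halfG, hbetHF, hkill⟩ := exists_lab D hR1
  refine ⟨lam, alf, bet, hlamHF, halfG, hbetHF,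
    strongPBW_lemma D lam alf bet hR1 hkill, ?_⟩
  -- the lifted map
  have compat : ∀ ⦃x y : TF k H V⦄,
      presRel k H V (lqDefRels k H V R1 R2 lam alf bet) x y → phi D x = phi D y := by
    intro x y h
    have h2 := phi_presRel_eq D lam alf bet hkill h
    have h3 := congrArg (ofA D) h2
    simpa [phiL] using h3
  set phibar : LQDefAlg k H V R1 R2 lam alf bet →ₐ[k] Ac D :=
    RingQuot.liftAlgHom k ⟨phi D, compat⟩ with hphibardef
  set phibarL : LQDefAlg k H V R1 R2 lam alf bet →ₗ[k] LQAlg k H V R1 R2 :=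
    (toA D).comp phibar.toLinearMap with hphibarLdef
  have phibarL_mk : ∀ x : TF k H V,
      phibarL (RingQuot.mkAlgHom k (presRel k H V (lqDefRels k H V R1 R2 lam alf bet)) x)
        = phiL D x := by
    intro x
    simp only [hphibarLdef, LinearMap.comp_apply, AlgHom.toLinearMap_apply, hphibardef]
    rw [RingQuot.liftAlgHom_mkAlgHom_apply]
    rfl
  have hinj : Function.Injective phibarL := by
    rw [← LinearMap.ker_eq_bot]
    rw [eq_bot_iff]
    intro b hb
    rw [LinearMap.mem_ker] at hb
    obtain ⟨n, hn⟩ := exists_mem_mapF k H V (lqDefRels k H V R1 R2 lam alf bet) b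
    obtain ⟨y, hy, rfl⟩ := hn
    rw [show (RingQuot.mkAlgHom k (presRel k H V
        (lqDefRels k H V R1 R2 lam alf bet))).toLinearMap y
      = RingQuot.mkAlgHom k (presRel k H V (lqDefRels k H V R1 R2 lam alf bet)) y
      from rfl] at hb ⊢
    rw [phibarL_mk] at hb
    rw [inj_main D lam alf bet hR1 hlamHF halfG hbetHF hkill n y hy hb]
    exact Submodule.zero_mem ⊥
  have hsurj : Function.Surjective phibarL := by
    intro a
    obtain ⟨m, hm⟩ := exists_mem_mapF k H V (lqRels k H V R1 R2) a
    rw [← phiL_filt_eq D] at hm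
    obtain ⟨x, hx, rfl⟩ := hm
    exact ⟨RingQuot.mkAlgHom k (presRel k H V (lqDefRels k H V R1 R2 lam alf bet)) x,
      phibarL_mk x⟩
  set Θ : LQDefAlg k H V R1 R2 lam alf bet ≃ₗ[k] LQAlg k H V R1 R2 :=
    LinearEquiv.ofBijective phibarL ⟨hinj, hsurj⟩ with hΘdef
  have hΘTL : Θ.toLinearMap = phibarL := by
    ext b
    rfl
  have hΘap : ∀ b, Θ b = phibarL b := fun b => rfl
  refine ⟨Θ, ?_, ?_, ?_⟩
  · rw [hΘap, hphibarLdef, LinearMap.comp_apply, AlgHom.toLinearMap_apply, map_one]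
    rfl
  · intro n
    rw [hΘTL, filtLQDef]
    rw [← Submodule.map_comp]
    have hcomp : phibarL ∘ₗ (RingQuot.mkAlgHom k
        (presRel k H V (lqDefRels k H V R1 R2 lam alf bet))).toLinearMap = phiL D :=
      LinearMap.ext phibarL_mk
    rw [hcomp, phiL_filt_eq D]
    rfl
  · intro x y m n hx hy
    have hx' : Θ x ∈ mapF k H V (lqRels k H V R1 R2) m := hx
    have hy' : Θ y ∈ mapF k H V (lqRels k H V R1 R2) n := hy
    have e1 : Θ (x * y) = mc D (Θ x) (Θ y) := by
      rw [hΘap, hΘap, hΘap, hphibarLdef]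
      simp only [LinearMap.comp_apply, AlgHom.toLinearMap_apply, map_mul]
      rfl
    rw [e1]
    exact mc_eq_sum D hx' hy' le_rfl

end FieldPart

end Fiber

end SP


/-- Let `H` be a `k`-algebra, `W` the free `H`-bimodule with basis spanning
`V` (so `T_H(W)` has the presentation `TF/(baseSet)`), and let
`A = T_H(W)/(R̃)` be a linear-quadratic homogeneous algebra, `R̃ ⊆ W ⊕ (W ⊗_H W)`, whose
degree-2 relations lie in `V ⊗ V` — here `R̃₁ = R1 ≤ W` (degree 1) and `R̃₂ = R2 ⊆ V ⊗ V`.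
If `A_t` is a graded deformation of `A` (multiplication maps `μ i` of degree `-i`,
associative and unital, with `μ 0` the product of `A`), then for every `c ∈ k` the fiber
`A_t|_{t=c}` is isomorphic, as a filtered algebra, to a strong PBW deformation of `A` of
the form `T_H(W)/(P)` with `P = (1−α−β)(R̃₂) ∪ (1−λ)(R̃₁)` for some `k`-linear maps
`λ : W → H`, `α : V⊗V → W`, `β : V⊗V → H`. -/
theorem stmt_15 {k H V : Type*} [Field k] [Ring H] [Algebra k H]
    [AddCommGroup V] [Module k V]
    (R1 : Submodule k (TF k H V)) (hR1 : R1 ≤ gradeF k H V 1)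
    (R2 : Submodule k (V ⊗[k] V))
    (μ : ℕ → LQAlg k H V R1 R2 →ₗ[k] LQAlg k H V R1 R2 →ₗ[k] LQAlg k H V R1 R2)
    (hμ0 : ∀ a b, μ 0 a b = a * b)
    (hunital : ∀ i, 1 ≤ i → ∀ a, μ i 1 a = 0 ∧ μ i a 1 = 0)
    (hdeg : ∀ (i m n : ℕ) (a b), a ∈ gradeLQ k H V R1 R2 m → b ∈ gradeLQ k H V R1 R2 n →
      (i ≤ m + n → μ i a b ∈ gradeLQ k H V R1 R2 (m + n - i)) ∧
      (m + n < i → μ i a b = 0))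
    (hassoc : ∀ (n : ℕ) (a b c),
      ∑ i ∈ Finset.range (n + 1), μ i (μ (n - i) a b) c
        = ∑ i ∈ Finset.range (n + 1), μ i a (μ (n - i) b c))
    (c : k) :
    ∃ (lam : TF k H V →ₗ[k] TF k H V) (α β : V ⊗[k] V →ₗ[k] TF k H V),
      (∀ x, lam x ∈ HF k H V) ∧
      (∀ r : V ⊗[k] V, α r ∈ gradeF k H V 1) ∧
      (∀ r : V ⊗[k] V, β r ∈ HF k H V) ∧
      IsStrongPBWofLQ k H V R1 R2 lam α β ∧
      ∃ Θ : LQDefAlg k H V R1 R2 lam α β ≃ₗ[k] LQAlg k H V R1 R2,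
        Θ 1 = 1 ∧
        (∀ n, Submodule.map Θ.toLinearMap (filtLQDef k H V R1 R2 lam α β n)
          = filtLQ k H V R1 R2 n) ∧
        (∀ (x y : LQDefAlg k H V R1 R2 lam α β) (m n : ℕ),
          Θ x ∈ filtLQ k H V R1 R2 m → Θ y ∈ filtLQ k H V R1 R2 n →
          Θ (x * y) = ∑ i ∈ Finset.range (m + n + 1), c ^ i • μ i (Θ x) (Θ y)) := by
  exact SP.master (D := SP.Defm.mk μ c hμ0 hunital hdeg hassoc) hR1
end
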